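/- arXiv:1811.00630 — 3 statements merged into one kernel-verified Lean document; each statement's English description precedes it below -/
import Mathlib

section
/- Let Φ_1,…,Φ_n ∈ K[G] and let {λ_t : t ∈ ℤ} be a subset of L satisfying v_L(λ_t) = t for all t ∈ ℤ and λ_{t_1}·λ_{t_2}^{−1} ∈ K whenever t_1 ≡ t_2 (mod p^n). Suppose that for all t ∈ ℤ and 1 ≤ i ≤ n we have v_L(Φ_i(λ_t)) = t + p^{n−i}b_i if 𝔞(r(t))_(n−i) ≥ 1, and v_L(Φ_i(λ_t)) > t + p^{n−i}b_i if 𝔞(r(t))_(n−i) = 0. Then there exist Ψ_1,…,Ψ_n ∈ K[G] such that ({Ψ_i},{λ_t}) is a Galois scaffold for L/K with precision c = 1. -/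
open scoped TensorProduct

noncomputable section

/-- The natural action of the group algebra `K[G]`, `G = Gal(L/K)`, on `L`. -/
def actK (K L : Type) [Field K] [Field L] [Algebra K L]
    (ξ : MonoidAlgebra K (L ≃ₐ[K] L)) (y : L) : L :=
  ξ.coeff.sum fun σ c => algebraMap K L c * σ y

/-- `vL` is a normalized (additive, surjective onto `ℤ`) valuation on the field `L`. -/
def IsNormValuation {L : Type} [Field L] (vL : L → WithTop ℤ) : Prop :=
  vL 0 = ⊤ ∧ (∀ x : L, x ≠ 0 → vL x ≠ ⊤) ∧
    (∀ x y : L, vL (x * y) = vL x + vL y) ∧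
    (∀ x y : L, min (vL x) (vL y) ≤ vL (x + y)) ∧
    (∀ m : ℤ, ∃ x : L, vL x = (m : WithTop ℤ))

/-- Bundled context: `vL` is the normalized valuation of `L`, Galois-invariant;
`K` embeds with value group `p^n ℤ` (so `L/K` is totally ramified of degree `p^n`);
`L` is complete; and the residue field (of `K`, hence of `L`) is perfect of
characteristic `p`. -/
def LocalCtx (p n : ℕ) (K L : Type) [Field K] [Field L] [Algebra K L]
    (vL : L → WithTop ℤ) : Prop :=
  IsNormValuation vL ∧
  (∀ (σ : L ≃ₐ[K] L) (x : L), vL (σ x) = vL x) ∧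
  (∀ k : K, k ≠ 0 → ∃ m : ℤ, vL (algebraMap K L k) = ((p ^ n * m : ℤ) : WithTop ℤ)) ∧
  (∀ f : ℕ → L,
    (∀ m : ℤ, ∃ N : ℕ, ∀ j k : ℕ, N ≤ j → N ≤ k → (m : WithTop ℤ) < vL (f j - f k)) →
    ∃ x : L, ∀ m : ℤ, ∃ N : ℕ, ∀ k : ℕ, N ≤ k → (m : WithTop ℤ) < vL (f k - x)) ∧
  (∀ x : K, (0 : WithTop ℤ) ≤ vL (algebraMap K L x) →
    ∃ y : K, (0 : WithTop ℤ) < vL (algebraMap K L (x - y ^ p)))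

/-- The `i`-th digit of `s` in base `p`. -/
def digit (p s i : ℕ) : ℕ := s / p ^ i % p

/-- `r : ℤ → S_{p^n}`, the least nonnegative residue modulo `p^n`. -/
def rres (p n : ℕ) (t : ℤ) : ℕ := (t % ((p : ℤ) ^ n)).toNat

/-- `𝔟(s) = s_(0) p^0 b_n + s_(1) p^1 b_{n-1} + ⋯ + s_(n-1) p^{n-1} b_1`. -/
def bfrak (p n : ℕ) (b : ℕ → ℤ) (s : ℕ) : ℤ :=
  ∑ i ∈ Finset.range n, (digit p s i : ℤ) * (p : ℤ) ^ i * b (n - i)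

/-- `𝔞 : S_{p^n} → S_{p^n}` is the inverse of the bijection `r ∘ (-𝔟)`. -/
def IsAfrak (p n : ℕ) (b : ℕ → ℤ) (afrak : ℕ → ℕ) : Prop :=
  ∀ s : ℕ, s < p ^ n → afrak s < p ^ n ∧ rres p n (-(bfrak p n b (afrak s))) = s

/-- `b 1 ≤ ⋯ ≤ b n` are the lower ramification breaks of `L/K`, counted with
multiplicity: for every `m`, the lower ramification group `G_m` has order
`p ^ #{i ∈ [1,n] : b i ≥ m}`. -/
def IsRamBreaks (p n : ℕ) (K L : Type) [Field K] [Field L] [Algebra K L]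
    (vL : L → WithTop ℤ) (b : ℕ → ℤ) : Prop :=
  (∀ i j : ℕ, 1 ≤ i → i ≤ j → j ≤ n → b i ≤ b j) ∧
  ∀ m : ℤ, Nat.card {σ : L ≃ₐ[K] L // ∀ x : L, (0 : WithTop ℤ) ≤ vL x →
      ((m + 1 : ℤ) : WithTop ℤ) ≤ vL (σ x - x)} =
    p ^ ((Finset.Icc 1 n).filter fun i => m ≤ b i).card

/-- `({Ψ_i}, {λ_t})` is a Galois scaffold for `L/K` with precision `c`. -/
def IsGaloisScaffold (p n : ℕ) (K L : Type) [Field K] [Field L] [Algebra K L]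
    (vL : L → WithTop ℤ) (b : ℕ → ℤ) (afrak : ℕ → ℕ)
    (Ψ : ℕ → MonoidAlgebra K (L ≃ₐ[K] L)) (lam : ℤ → L) (c : ℕ) : Prop :=
  (∀ t : ℤ, vL (lam t) = (t : WithTop ℤ)) ∧
  (∀ t₁ t₂ : ℤ, ((p : ℤ) ^ n) ∣ (t₁ - t₂) → ∃ k : K, lam t₁ = algebraMap K L k * lam t₂) ∧
  (∀ i : ℕ, 1 ≤ i → i ≤ n → actK K L (Ψ i) 1 = 0) ∧
  (∀ i : ℕ, 1 ≤ i → i ≤ n → ∀ t : ℤ,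
    (1 ≤ digit p (afrak (rres p n t)) (n - i) →
      ∃ u : K, vL (algebraMap K L u) = 0 ∧
        ((t + (p : ℤ) ^ (n - i) * b i + c : ℤ) : WithTop ℤ) ≤
          vL (actK K L (Ψ i) (lam t) -
            algebraMap K L u * lam (t + (p : ℤ) ^ (n - i) * b i))) ∧
    (digit p (afrak (rres p n t)) (n - i) = 0 →
      ((t + (p : ℤ) ^ (n - i) * b i + c : ℤ) : WithTop ℤ) ≤
        vL (actK K L (Ψ i) (lam t))))

/-- The map `a ⊗ b ↦ a · σ(b)`. -/
def phiAux (K L : Type) [Field K] [Field L] [Algebra K L] (σ : L ≃ₐ[K] L) :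
    L ⊗[K] L →ₗ[K] L :=
  TensorProduct.lift ((LinearMap.mul K L).compl₂ σ.toLinearMap)

/-- The map `φ : L ⊗_K L → L[G]`, `φ(a ⊗ b) = Σ_{σ ∈ G} a σ(b) σ`, with `L[G]`
realized as finitely supported functions `G →₀ L`. -/
def phi (K L : Type) [Field K] [Field L] [Algebra K L] [FiniteDimensional K L] :
    L ⊗[K] L →ₗ[K] ((L ≃ₐ[K] L) →₀ L) :=
  ∑ σ : L ≃ₐ[K] L, (Finsupp.lsingle σ).comp (phiAux K L σ)

/-- `φ(β)` lies in `K[G] ⊆ L[G]`, i.e. all its coefficients are in `K`. -/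
def PhiInKG (K L : Type) [Field K] [Field L] [Algebra K L] [FiniteDimensional K L]
    (β : L ⊗[K] L) : Prop :=
  ∀ σ : L ≃ₐ[K] L, ∃ k : K, phi K L β σ = algebraMap K L k

/-- `𝒯` is the set of Teichmüller representatives of `K`: a multiplicatively
closed set of representatives for the residue field. -/
def IsTeichmuller (K L : Type) [Field K] [Field L] [Algebra K L]
    (vL : L → WithTop ℤ) (𝒯 : Set K) : Prop :=
  (0 : K) ∈ 𝒯 ∧
  (∀ x ∈ 𝒯, x ≠ 0 → vL (algebraMap K L x) = 0) ∧
  (∀ t₁ ∈ 𝒯, ∀ t₂ ∈ 𝒯, t₁ * t₂ ∈ 𝒯) ∧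
  (∀ x : K, (0 : WithTop ℤ) ≤ vL (algebraMap K L x) →
    ∃! t : K, t ∈ 𝒯 ∧ (0 : WithTop ℤ) < vL (algebraMap K L (x - t)))

/-- The partial order on `(ℤ × ℤ)/H`, `H = ⟨(p^n, -p^n)⟩`, expressed on
representatives: `[q] ≤ [q']` iff some representative of `[q']` dominates `q`. -/
def cosetLE (p n : ℕ) (q q' : ℤ × ℤ) : Prop :=
  ∃ k : ℤ, q.1 ≤ q'.1 + k * (p : ℤ) ^ n ∧ q.2 ≤ q'.2 - k * (p : ℤ) ^ n

/-- Equality of cosets modulo `H = ⟨(p^n, -p^n)⟩`. -/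
def cosetEq (p n : ℕ) (q q' : ℤ × ℤ) : Prop :=
  ∃ k : ℤ, q'.1 = q.1 + k * (p : ℤ) ^ n ∧ q'.2 = q.2 - k * (p : ℤ) ^ n

/-- `A : ℤ → ℕ → K` records the coefficients of the expansion
`β = Σ_{(i,j) ∈ ℱ} A i j · π_L^i ⊗ π_L^j` with Teichmüller coefficients:
writing `β = Σ_{0 ≤ j < p^n} c_j ⊗ π_L^j`, each `c_j` is the convergent sum
`Σ_i A i j π_L^i` (partial sums up to `m` approximate `c_j` within `M_L^{m+1}`). -/
def IsExpansion (p n : ℕ) (K L : Type) [Field K] [Field L] [Algebra K L]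
    (vL : L → WithTop ℤ) (𝒯 : Set K) (πL : L) (β : L ⊗[K] L) (A : ℤ → ℕ → K) : Prop :=
  (∀ (i : ℤ) (j : ℕ), A i j ∈ 𝒯) ∧
  ∃ N : ℕ → ℤ, ∃ c : ℕ → L,
    (∀ (j : ℕ) (i : ℤ), i < N j → A i j = 0) ∧
    β = ∑ j ∈ Finset.range (p ^ n), c j ⊗ₜ[K] (πL ^ j) ∧
    (∀ j : ℕ, j < p ^ n → ∀ m : ℤ,
      (m : WithTop ℤ) <
        vL (c j - ∑ i ∈ Finset.Icc (N j) m, algebraMap K L (A i j) * πL ^ (i : ℤ)))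

/-- `R(β)`: the classes `[i,j]`, `(i,j) ∈ ℱ`, with `a_{ij} ≠ 0`. -/
def Rset (p n : ℕ) {K : Type} [Field K] (A : ℤ → ℕ → K) : Set (ℤ × ℤ) :=
  {q | ∃ (i : ℤ) (j : ℕ), j < p ^ n ∧ A i j ≠ 0 ∧ q = (i, (j : ℤ))}

/-- `D(β)`: the diagram of `β` (upward closure of `R(β)`). -/
def Dset (p n : ℕ) {K : Type} [Field K] (A : ℤ → ℕ → K) : Set (ℤ × ℤ) :=
  {q | ∃ r ∈ Rset p n A, cosetLE p n r q}

/-- `G(β)`: the minimal elements of `D(β)`. -/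
def Gset (p n : ℕ) {K : Type} [Field K] (A : ℤ → ℕ → K) : Set (ℤ × ℤ) :=
  {q | q ∈ Dset p n A ∧ ∀ q' ∈ Dset p n A, cosetLE p n q' q → cosetLE p n q q'}

/-- `dval = d(β) = min {i + j : [i,j] ∈ D(β)}`. -/
def IsDval (p n : ℕ) {K : Type} [Field K] (A : ℤ → ℕ → K) (dval : ℤ) : Prop :=
  IsLeast {v : ℤ | ∃ q ∈ Dset p n A, q.1 + q.2 = v} dval

/-- `N(β)`: the diagonal of `β`. -/
def Nset (p n : ℕ) {K : Type} [Field K] (A : ℤ → ℕ → K) (dval : ℤ) : Set (ℤ × ℤ) :=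
  {q | q ∈ Dset p n A ∧ q.1 + q.2 = dval}

/-- `|N(β)| = 2` (as a set of cosets mod `H`). -/
def NTwoCosets (p n : ℕ) {K : Type} [Field K] (A : ℤ → ℕ → K) (dval : ℤ) : Prop :=
  ∃ q₁ ∈ Nset p n A dval, ∃ q₂ ∈ Nset p n A dval, ¬ cosetEq p n q₁ q₂ ∧
    ∀ q ∈ Nset p n A dval, cosetEq p n q q₁ ∨ cosetEq p n q q₂

/-- `L/K` is semistable: there is `β ∈ L ⊗_K L` with `φ(β) ∈ K[G]`,
`p ∤ d(β)` and `|N(β)| = 2`. -/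
def Semistable (p n : ℕ) (K L : Type) [Field K] [Field L] [Algebra K L]
    [FiniteDimensional K L] (vL : L → WithTop ℤ) (𝒯 : Set K) (πL : L) : Prop :=
  ∃ (β : L ⊗[K] L) (A : ℤ → ℕ → K) (dval : ℤ),
    IsExpansion p n K L vL 𝒯 πL β A ∧ PhiInKG K L β ∧
    IsDval p n A dval ∧ ¬ ((p : ℤ) ∣ dval) ∧ NTwoCosets p n A dval

/-- `L/K` is semistable with precision `c`. -/
def SemistableWithPrec (p n : ℕ) (K L : Type) [Field K] [Field L] [Algebra K L]
    [FiniteDimensional K L] (vL : L → WithTop ℤ) (𝒯 : Set K) (πL : L) (c : ℕ) : Prop :=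
  ∃ (β : L ⊗[K] L) (A : ℤ → ℕ → K) (dval : ℤ),
    IsExpansion p n K L vL 𝒯 πL β A ∧ PhiInKG K L β ∧
    IsDval p n A dval ∧ ¬ ((p : ℤ) ∣ dval) ∧ NTwoCosets p n A dval ∧
    ∀ q ∈ Gset p n A, q ∉ Nset p n A dval → dval + c ≤ q.1 + q.2

/-- `L/K` is stable: semistable with `β` chosen so that `G(β) = N(β)`. -/
def Stable (p n : ℕ) (K L : Type) [Field K] [Field L] [Algebra K L]
    [FiniteDimensional K L] (vL : L → WithTop ℤ) (𝒯 : Set K) (πL : L) : Prop :=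
  ∃ (β : L ⊗[K] L) (A : ℤ → ℕ → K) (dval : ℤ),
    IsExpansion p n K L vL 𝒯 πL β A ∧ PhiInKG K L β ∧
    IsDval p n A dval ∧ ¬ ((p : ℤ) ∣ dval) ∧ NTwoCosets p n A dval ∧
    Gset p n A = Nset p n A dval

/-- `d` is the valuation of the different of `L/K`: the largest `d` such that
every `x` with `v_L(x) ≥ -d` has trace in `O_K`. -/
def IsDifferentExp (K L : Type) [Field K] [Field L] [Algebra K L]
    [FiniteDimensional K L] (vL : L → WithTop ℤ) (d : ℤ) : Prop :=
  IsGreatest {m : ℤ | ∀ x : L, ((-m : ℤ) : WithTop ℤ) ≤ vL x →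
    (0 : WithTop ℤ) ≤ vL (algebraMap K L (Algebra.trace K L x))} d

end

noncomputable section ScafAux
variable {L : Type} [Field L] {vL : L → WithTop ℤ}

lemma scaf_v_one (hv : IsNormValuation vL) : vL 1 = 0 := by
  have h := hv.2.2.1 1 1
  rw [one_mul] at h
  obtain ⟨m, hm⟩ := WithTop.ne_top_iff_exists.mp (hv.2.1 1 one_ne_zero)
  rw [← hm] at h ⊢
  have : m = m + m := by exact_mod_cast h
  have : m = 0 := by omega
  simp [this]

lemma scaf_v_neg (hv : IsNormValuation vL) (x : L) : vL (-x) = vL x := by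
  have h1 : vL (-1 : L) = 0 := by
    have h := hv.2.2.1 (-1 : L) (-1)
    rw [neg_mul_neg, one_mul, scaf_v_one hv] at h
    obtain ⟨m, hm⟩ := WithTop.ne_top_iff_exists.mp (hv.2.1 (-1 : L) (by norm_num))
    rw [← hm] at h ⊢
    have : (0 : ℤ) = m + m := by exact_mod_cast h
    have : m = 0 := by omega
    simp [this]
  have h := hv.2.2.1 (-1 : L) x
  rw [neg_one_mul, h1, zero_add] at h
  exact h

lemma scaf_v_sub (hv : IsNormValuation vL) (x y : L) :
    min (vL x) (vL y) ≤ vL (x - y) := by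
  have := hv.2.2.2.1 x (-y)
  rwa [scaf_v_neg hv, ← sub_eq_add_neg] at this

lemma scaf_v_add_eq_left (hv : IsNormValuation vL) {x y : L} (hxy : vL x < vL y) :
    vL (x + y) = vL x := by
  refine le_antisymm ?_ (le_trans (by simp [le_of_lt hxy]) (hv.2.2.2.1 x y))
  have h := scaf_v_sub hv (x + y) y
  rw [add_sub_cancel_right] at h
  rcases min_le_iff.mp h with h' | h'
  · exact h'
  · exact absurd h' (not_le.mpr hxy)

lemma scaf_succ_le {m : ℤ} {a : WithTop ℤ} (h : (m : WithTop ℤ) < a) :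
    ((m + 1 : ℤ) : WithTop ℤ) ≤ a := by
  cases a with
  | top => exact le_top
  | coe k =>
      have : m < k := by exact_mod_cast h
      exact_mod_cast (by omega : m + 1 ≤ k)

lemma scaf_v_sum_ge (hv : IsNormValuation vL) {ι : Type*} (s : Finset ι) (f : ι → L)
    (a : WithTop ℤ) (h : ∀ i ∈ s, a ≤ vL (f i)) : a ≤ vL (∑ i ∈ s, f i) := by
  classical
  induction s using Finset.cons_induction with
  | empty => simp [hv.1]
  | cons i s hi ih =>
      rw [Finset.sum_cons]
      refine le_trans (le_min (h i (Finset.mem_cons_self i s))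
        (ih fun j hj => h j (Finset.mem_cons_of_mem hj))) (hv.2.2.2.1 _ _)

lemma scaf_v_sum_eq (hv : IsNormValuation vL) {ι : Type*} [DecidableEq ι]
    (s : Finset ι) (f : ι → L) (i₀ : ι) (h₀ : i₀ ∈ s)
    (hmin : ∀ i ∈ s, i ≠ i₀ → vL (f i₀) < vL (f i)) :
    vL (∑ i ∈ s, f i) = vL (f i₀) := by
  rw [← Finset.add_sum_erase s f h₀]
  rcases eq_or_ne (vL (f i₀)) ⊤ with ht | ht
  · have he : s.erase i₀ = ∅ := by
      rw [Finset.eq_empty_iff_forall_notMem]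
      intro i hi
      exact absurd (hmin i (Finset.mem_of_mem_erase hi) (Finset.ne_of_mem_erase hi))
        (by simp [ht])
    simp [he]
  · obtain ⟨m, hm⟩ := WithTop.ne_top_iff_exists.mp ht
    have hrest : ((m + 1 : ℤ) : WithTop ℤ) ≤ vL (∑ i ∈ s.erase i₀, f i) := by
      refine scaf_v_sum_ge hv _ _ _ fun i hi => scaf_succ_le ?_
      rw [hm]
      exact hmin i (Finset.mem_of_mem_erase hi) (Finset.ne_of_mem_erase hi)
    have hlt : vL (f i₀) < vL (∑ i ∈ s.erase i₀, f i) := by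
      refine lt_of_lt_of_le ?_ hrest
      rw [← hm]
      exact_mod_cast (by omega : m < m + 1)
    exact scaf_v_add_eq_left hv hlt

lemma actK_sub (K L : Type) [Field K] [Field L] [Algebra K L]
    (ξ η : MonoidAlgebra K (L ≃ₐ[K] L)) (y : L) :
    actK K L (ξ - η) y = actK K L ξ y - actK K L η y := by
  unfold actK; rw [MonoidAlgebra.coeff_sub]; exact Finsupp.sum_sub_index (fun a b₁ b₂ => by rw [map_sub, sub_mul])

lemma actK_single_one (K L : Type) [Field K] [Field L] [Algebra K L] (c : K) (y : L) :
    actK K L (MonoidAlgebra.single (1 : L ≃ₐ[K] L) c) y = algebraMap K L c * y := by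
  unfold actK
  rw [MonoidAlgebra.coeff_single, Finsupp.sum_single_index (by simp)]
  simp [AlgEquiv.one_apply]

lemma actK_one_val (K L : Type) [Field K] [Field L] [Algebra K L]
    (ξ : MonoidAlgebra K (L ≃ₐ[K] L)) :
    actK K L ξ 1 = algebraMap K L (ξ.coeff.sum fun _ c => c) := by
  unfold actK
  simp [Finsupp.sum, map_sum]

lemma actK_algmul (K L : Type) [Field K] [Field L] [Algebra K L]
    (ξ : MonoidAlgebra K (L ≃ₐ[K] L)) (k : K) (y : L) :
    actK K L ξ (algebraMap K L k * y) = algebraMap K L k * actK K L ξ y := by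
  unfold actK
  rw [Finsupp.sum, Finsupp.sum, Finset.mul_sum]
  refine Finset.sum_congr rfl fun σ _ => ?_
  rw [map_mul, AlgEquiv.commutes]
  ring

lemma actK_sum (K L : Type) [Field K] [Field L] [Algebra K L]
    (ξ : MonoidAlgebra K (L ≃ₐ[K] L)) {ι : Type*} (s : Finset ι) (f : ι → L) :
    actK K L ξ (∑ i ∈ s, f i) = ∑ i ∈ s, actK K L ξ (f i) := by
  unfold actK
  simp only [Finsupp.sum, map_sum, Finset.mul_sum]
  exact Finset.sum_comm

end ScafAux

/-- Proposition 2.2 (scaf1). -/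
theorem stmt_0 (p n : ℕ) (hp : p.Prime) (hn : 1 ≤ n)
    (K L : Type) [Field K] [Field L] [Algebra K L] [IsGalois K L] [FiniteDimensional K L]
    (hdeg : Nat.card (L ≃ₐ[K] L) = p ^ n)
    (vL : L → WithTop ℤ) (hctx : LocalCtx p n K L vL)
    (b : ℕ → ℤ) (hb : IsRamBreaks p n K L vL b)
    (hpb : ∀ i : ℕ, 1 ≤ i → i ≤ n → ¬ ((p : ℤ) ∣ b i))
    (afrak : ℕ → ℕ) (hafrak : IsAfrak p n b afrak)
    (Φ : ℕ → MonoidAlgebra K (L ≃ₐ[K] L)) (lam : ℤ → L)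
    (hlam1 : ∀ t : ℤ, vL (lam t) = (t : WithTop ℤ))
    (hlam2 : ∀ t₁ t₂ : ℤ, ((p : ℤ) ^ n) ∣ (t₁ - t₂) →
      ∃ k : K, lam t₁ = algebraMap K L k * lam t₂)
    (hyp : ∀ i : ℕ, 1 ≤ i → i ≤ n → ∀ t : ℤ,
      (1 ≤ digit p (afrak (rres p n t)) (n - i) →
        vL (actK K L (Φ i) (lam t)) = ((t + (p : ℤ) ^ (n - i) * b i : ℤ) : WithTop ℤ)) ∧
      (digit p (afrak (rres p n t)) (n - i) = 0 →
        ((t + (p : ℤ) ^ (n - i) * b i : ℤ) : WithTop ℤ) < vL (actK K L (Φ i) (lam t)))) :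
    ∃ Ψ : ℕ → MonoidAlgebra K (L ≃ₐ[K] L),
      IsGaloisScaffold p n K L vL b afrak Ψ lam 1 := by
    classical
  obtain ⟨hv, hgal, hK, hcomp, hperf⟩ := hctx
  have hdis : ∀ (m m' : ℤ) (i i' : ℕ), i < p ^ n → i' < p ^ n →
      (p:ℤ)^n * m + (i : ℤ) = (p:ℤ)^n * m' + (i' : ℤ) → i = i' := by
    intro m m' i i' hi hi' heq
    have hPcast : ((p ^ n : ℕ) : ℤ) = (p:ℤ)^n := by push_cast; rfl
    have hi2 : (i : ℤ) < (p:ℤ)^n := by rw [← hPcast]; exact_mod_cast hi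
    have hi2' : (i' : ℤ) < (p:ℤ)^n := by rw [← hPcast]; exact_mod_cast hi'
    have h1 : (i : ℤ) % ((p:ℤ)^n) = (i' : ℤ) % ((p:ℤ)^n) := by
      have heq' : (i:ℤ) + (p:ℤ)^n * m = (i':ℤ) + (p:ℤ)^n * m' := by linarith
      have h1 := congrArg (fun z => z % ((p:ℤ)^n)) heq'
      simpa only [Int.add_mul_emod_self_left] using h1
    rw [Int.emod_eq_of_lt (Int.natCast_nonneg i) hi2,
      Int.emod_eq_of_lt (Int.natCast_nonneg i') hi2'] at h1
    exact_mod_cast h1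
  -- the core valuation lemma for K-combinations of the lam ((i:ℕ):ℤ), i < p^n
  have core : ∀ c : Fin (p ^ n) → K, (∃ j, c j ≠ 0) →
      ∃ i₀ : Fin (p ^ n), c i₀ ≠ 0 ∧
        (∃ m : ℤ, vL (algebraMap K L (c i₀) * lam ((i₀:ℕ):ℤ))
          = (((p:ℤ)^n * m + (i₀:ℕ) : ℤ) : WithTop ℤ)) ∧
        vL (∑ i : Fin (p^n), algebraMap K L (c i) * lam ((i:ℕ):ℤ))
          = vL (algebraMap K L (c i₀) * lam ((i₀:ℕ):ℤ)) ∧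
        ∀ i : Fin (p^n), i ≠ i₀ →
          vL (algebraMap K L (c i₀) * lam ((i₀:ℕ):ℤ))
            < vL (algebraMap K L (c i) * lam ((i:ℕ):ℤ)) := by
    rintro c ⟨j, hj⟩
    set F : Fin (p^n) → L := fun i => algebraMap K L (c i) * lam ((i:ℕ):ℤ) with hF
    have hval : ∀ i : Fin (p^n), c i ≠ 0 →
        ∃ m : ℤ, vL (F i) = (((p:ℤ)^n * m + (i:ℕ) : ℤ) : WithTop ℤ) := by
      intro i hi
      obtain ⟨m, hm⟩ := hK (c i) hi
      refine ⟨m, ?_⟩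
      rw [hF]
      simp only []
      rw [hv.2.2.1, hm, hlam1, ← WithTop.coe_add]
    set s : Finset (Fin (p^n)) := Finset.univ.filter (fun i => c i ≠ 0) with hs
    have hjs : j ∈ s := by simp [hs, hj]
    obtain ⟨i₀, hi₀s, hi₀min⟩ := Finset.exists_min_image s (fun i => vL (F i)) ⟨j, hjs⟩
    have hc₀ : c i₀ ≠ 0 := by simpa [hs] using hi₀s
    obtain ⟨m₀, hm₀⟩ := hval i₀ hc₀
    have hstrict : ∀ i : Fin (p^n), i ≠ i₀ → vL (F i₀) < vL (F i) := by
      intro i hii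
      by_cases hci : c i = 0
      · have hz : F i = 0 := by simp [hF, hci]
        rw [hz, hv.1, hm₀]
        exact WithTop.coe_lt_top _
      · obtain ⟨m, hm⟩ := hval i hci
        have hle : vL (F i₀) ≤ vL (F i) := hi₀min i (by simp [hs, hci])
        refine lt_of_le_of_ne hle ?_
        intro heq
        rw [hm₀, hm] at heq
        have heq2 : (p:ℤ)^n * m₀ + ((i₀:ℕ):ℤ) = (p:ℤ)^n * m + ((i:ℕ):ℤ) := by
          exact_mod_cast heq
        exact hii (Fin.ext (hdis m₀ m i₀ i i₀.isLt i.isLt heq2)).symm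
    have hsum := scaf_v_sum_eq hv s F i₀ hi₀s (fun i _ hne => hstrict i hne)
    have hss : ∑ i ∈ s, F i = ∑ i : Fin (p^n), F i :=
      Finset.sum_subset (Finset.subset_univ s) (fun i _ hi => by
        have hci : c i = 0 := by simpa [hs] using hi
        simp [hF, hci])
    exact ⟨i₀, hc₀, ⟨m₀, hm₀⟩, by rw [← hss]; exact hsum, hstrict⟩
  -- linear independence and basis expansion
  have hli : LinearIndependent K (fun i : Fin (p^n) => lam ((i:ℕ):ℤ)) := by
    rw [Fintype.linearIndependent_iff]
    intro g hg
    by_contra hcon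
    push_neg at hcon
    obtain ⟨j, hj⟩ := hcon
    obtain ⟨i₀, hc₀, ⟨m₀, hm₀⟩, hsum, _⟩ := core g ⟨j, hj⟩
    have h0 : (∑ i : Fin (p^n), algebraMap K L (g i) * lam ((i:ℕ):ℤ)) = 0 := by
      rw [← hg]; exact Finset.sum_congr rfl fun i _ => (Algebra.smul_def _ _).symm
    rw [h0, hv.1, hm₀] at hsum
    exact WithTop.coe_ne_top hsum.symm
  haveI : Nonempty (Fin (p^n)) := ⟨⟨0, pow_pos hp.pos n⟩⟩
  have hcard : Fintype.card (Fin (p^n)) = Module.finrank K L := by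
    rw [Fintype.card_fin, ← IsGalois.card_aut_eq_finrank, hdeg]
  obtain ⟨B, hBc⟩ : ∃ B : Module.Basis (Fin (p^n)) K L, ∀ i, B i = lam ((i:ℕ):ℤ) :=
    ⟨basisOfLinearIndependentOfCardEqFinrank hli hcard,
      fun i => congrFun (coe_basisOfLinearIndependentOfCardEqFinrank hli hcard) i⟩
  have hB : ∀ x : L, ∃ c : Fin (p^n) → K,
      x = ∑ i : Fin (p^n), algebraMap K L (c i) * lam ((i:ℕ):ℤ) := by
    intro x
    refine ⟨fun i => B.repr x i, ?_⟩
    calc x = ∑ i, B.repr x i • B i := (B.sum_repr x).symm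
      _ = _ := Finset.sum_congr rfl fun i _ => by rw [Algebra.smul_def, hBc i]
  -- approximation of an element of exact valuation T by a unit multiple of lam T
  have approx : ∀ (x : L) (T : ℤ), vL x = (T : WithTop ℤ) →
      ∃ u : K, vL (algebraMap K L u) = 0 ∧
        ((T + 1 : ℤ) : WithTop ℤ) ≤ vL (x - algebraMap K L u * lam T) := by
    intro x T hx
    obtain ⟨c, hc⟩ := hB x
    have hex : ∃ j, c j ≠ 0 := by
      by_contra hall
      push_neg at hall
      have hz : x = 0 := by
        rw [hc]; exact Finset.sum_eq_zero fun i _ => by simp [hall i]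
      rw [hz, hv.1] at hx
      exact WithTop.top_ne_coe hx
    obtain ⟨i₀, hc₀, ⟨m₀, hm₀⟩, hsum, hstrict⟩ := core c hex
    rw [← hc, hx] at hsum
    have hT : T = (p:ℤ)^n * m₀ + (i₀:ℕ) := by
      rw [hm₀] at hsum; exact_mod_cast hsum
    obtain ⟨k, hk⟩ := hlam2 ((i₀:ℕ):ℤ) T ⟨-m₀, by rw [hT]; ring⟩
    have h1 : algebraMap K L (c i₀ * k) * lam T
        = algebraMap K L (c i₀) * lam ((i₀:ℕ):ℤ) := by
      rw [map_mul, hk]; ring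
    refine ⟨c i₀ * k, ?_, ?_⟩
    · have hq : vL (algebraMap K L (c i₀ * k)) + (T : WithTop ℤ) = (T : WithTop ℤ) := by
        rw [← hlam1 T, ← hv.2.2.1, h1, hm₀, ← hT]
        rw [hlam1]
      cases hvu : vL (algebraMap K L (c i₀ * k)) with
      | top => rw [hvu] at hq; simp at hq
      | coe z =>
          rw [hvu] at hq
          have hz : z + T = T := by exact_mod_cast hq
          have hz0 : z = 0 := by omega
          simp [hz0]
    · have hrw : x - algebraMap K L (c i₀ * k) * lam T
          = ∑ i ∈ Finset.univ.erase i₀, algebraMap K L (c i) * lam ((i:ℕ):ℤ) := by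
        rw [h1, hc, ← Finset.add_sum_erase _ _ (Finset.mem_univ i₀)]
        ring
      rw [hrw]
      refine scaf_v_sum_ge hv _ _ _ fun i hi => scaf_succ_le ?_
      have hlt := hstrict i (Finset.ne_of_mem_erase hi)
      rw [hm₀, ← hT] at hlt
      exact hlt
  -- the coefficient-sum of Φ i has valuation > p^(n-i) * b i
  have epsBound : ∀ i : ℕ, 1 ≤ i → i ≤ n →
      (((p:ℤ)^(n-i) * b i + 1 : ℤ) : WithTop ℤ) ≤ vL (actK K L (Φ i) 1) := by
    intro i h1 h2
    obtain ⟨c, hc⟩ := hB 1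
    have hex : ∃ j, c j ≠ 0 := by
      by_contra hall
      push_neg at hall
      have h0 : (1:L) = 0 := by
        rw [hc]; exact Finset.sum_eq_zero fun i _ => by simp [hall i]
      exact one_ne_zero h0
    obtain ⟨i₀, hc₀, ⟨m₀, hm₀⟩, hsum, hstrict⟩ := core c hex
    rw [← hc, scaf_v_one hv] at hsum
    have hterm0 : ∀ j : Fin (p^n),
        (0 : WithTop ℤ) ≤ vL (algebraMap K L (c j) * lam ((j:ℕ):ℤ)) := by
      intro j
      rcases eq_or_ne j i₀ with rfl | hne
      · exact le_of_eq hsum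
      · exact le_of_lt (lt_of_le_of_lt (le_of_eq hsum) (hstrict j hne))
    have hPhi : ∀ j : Fin (p^n), ((((j:ℕ):ℤ) + (p:ℤ)^(n-i) * b i : ℤ) : WithTop ℤ)
        ≤ vL (actK K L (Φ i) (lam ((j:ℕ):ℤ))) := by
      intro j
      rcases Nat.eq_zero_or_pos (digit p (afrak (rres p n ((j:ℕ):ℤ))) (n - i)) with hd | hd
      · exact le_of_lt ((hyp i h1 h2 ((j:ℕ):ℤ)).2 hd)
      · exact le_of_eq ((hyp i h1 h2 ((j:ℕ):ℤ)).1 hd).symm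
    have hact : actK K L (Φ i) 1
        = ∑ j : Fin (p^n), algebraMap K L (c j) * actK K L (Φ i) (lam ((j:ℕ):ℤ)) := by
      rw [hc, actK_sum]
      exact Finset.sum_congr rfl fun j _ => actK_algmul K L _ _ _
    have hbound : (((p:ℤ)^(n-i) * b i : ℤ) : WithTop ℤ) ≤ vL (actK K L (Φ i) 1) := by
      rw [hact]
      refine scaf_v_sum_ge hv _ _ _ fun j _ => ?_
      rw [hv.2.2.1]
      have ht0 := hterm0 j
      rw [hv.2.2.1, hlam1] at ht0
      calc (((p:ℤ)^(n-i) * b i : ℤ) : WithTop ℤ)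
          = 0 + (((p:ℤ)^(n-i) * b i : ℤ) : WithTop ℤ) := (zero_add _).symm
        _ ≤ (vL (algebraMap K L (c j)) + ((((j:ℕ):ℤ)) : WithTop ℤ))
              + (((p:ℤ)^(n-i) * b i : ℤ) : WithTop ℤ) := add_le_add_left ht0 _
        _ = vL (algebraMap K L (c j))
              + ((((j:ℕ):ℤ) + (p:ℤ)^(n-i) * b i : ℤ) : WithTop ℤ) := by
            rw [add_assoc, ← WithTop.coe_add]
        _ ≤ vL (algebraMap K L (c j)) + vL (actK K L (Φ i) (lam ((j:ℕ):ℤ))) :=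
            add_le_add_right (hPhi j) _
    have hnd : ∀ m : ℤ, (p:ℤ)^n * m ≠ (p:ℤ)^(n-i) * b i := by
      intro m hm
      have hsplit : (p:ℤ)^n = (p:ℤ)^(n-i) * (p:ℤ)^i := by
        rw [← pow_add]; congr 1; omega
      rw [hsplit, mul_assoc] at hm
      have hpow : ((p:ℤ)^(n-i)) ≠ 0 := by
        have : (0:ℤ) < (p:ℤ) := by exact_mod_cast hp.pos
        positivity
      have hb2 : b i = (p:ℤ)^i * m := (mul_left_cancel₀ hpow hm).symm
      refine hpb i h1 h2 ⟨(p:ℤ)^(i-1) * m, ?_⟩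
      have hpi : (p:ℤ)^i = (p:ℤ) * (p:ℤ)^(i-1) := by
        rw [← pow_succ']; congr 1; omega
      rw [hb2, hpi, mul_assoc]
    rw [actK_one_val] at hbound ⊢
    rcases eq_or_ne ((Φ i).coeff.sum fun _ c => c) 0 with h0 | h0
    · rw [h0, map_zero, hv.1]; exact le_top
    · obtain ⟨m, hm⟩ := hK _ h0
      rw [hm] at hbound ⊢
      have hle : (p:ℤ)^(n-i) * b i ≤ (p:ℤ)^n * m := by exact_mod_cast hbound
      have hlt : (p:ℤ)^(n-i) * b i + 1 ≤ (p:ℤ)^n * m := by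
        rcases lt_or_eq_of_le hle with h | h
        · omega
        · exact absurd h.symm (hnd m)
      exact_mod_cast hlt
  -- assemble the scaffold
  refine ⟨fun j => Φ j - MonoidAlgebra.single (1 : L ≃ₐ[K] L) ((Φ j).coeff.sum fun _ c => c),
    hlam1, hlam2, ?_, ?_⟩
  · intro i h1 h2
    simp only []
    rw [actK_sub, actK_one_val, actK_single_one, mul_one, sub_self]
  · intro i h1 h2 t
    simp only [Nat.cast_one]
    have hPsi : ∀ y : L,
        actK K L (Φ i - MonoidAlgebra.single (1 : L ≃ₐ[K] L) ((Φ i).coeff.sum fun _ c => c)) y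
          = actK K L (Φ i) y - algebraMap K L ((Φ i).coeff.sum fun _ c => c) * y := by
      intro y; rw [actK_sub, actK_single_one]
    have heps : ((t + (p:ℤ)^(n-i) * b i + 1 : ℤ) : WithTop ℤ)
        ≤ vL (algebraMap K L ((Φ i).coeff.sum fun _ c => c) * lam t) := by
      rw [hv.2.2.1, hlam1]
      have hb2 := epsBound i h1 h2
      rw [actK_one_val] at hb2
      have h1' : ((t + (p:ℤ)^(n-i) * b i + 1 : ℤ) : WithTop ℤ)
          = (((p:ℤ)^(n-i) * b i + 1 : ℤ) : WithTop ℤ) + (t : WithTop ℤ) := by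
        rw [← WithTop.coe_add]
        exact congrArg _ (by ring)
      rw [h1']
      exact add_le_add_left hb2 _
    constructor
    · intro hd
      have hx := (hyp i h1 h2 t).1 hd
      obtain ⟨u, hu0, hule⟩ := approx _ _ hx
      refine ⟨u, hu0, ?_⟩
      have hdiff : actK K L
            (Φ i - MonoidAlgebra.single (1 : L ≃ₐ[K] L) ((Φ i).coeff.sum fun _ c => c)) (lam t)
            - algebraMap K L u * lam (t + (p:ℤ)^(n-i) * b i)
          = (actK K L (Φ i) (lam t) - algebraMap K L u * lam (t + (p:ℤ)^(n-i) * b i))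
            - algebraMap K L ((Φ i).coeff.sum fun _ c => c) * lam t := by
        rw [hPsi]; ring
      rw [hdiff]
      exact le_trans (le_min hule heps) (scaf_v_sub hv _ _)
    · intro hd
      have hx := (hyp i h1 h2 t).2 hd
      rw [hPsi]
      exact le_trans (le_min (scaf_succ_le hx) heps) (scaf_v_sub hv _ _)
end

section
/- Let ξ ∈ K[G] be nonzero, let β ∈ L ⊗_K L satisfy φ(β) = ξ, and let a, b ∈ ℤ. Then the following are equivalent: (a) [a,b] ∈ D(β); (b) f_ξ(−b−i_0) ≤ a. -/
open scoped TensorProduct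

namespace S5

variable {L : Type} [Field L] {vL : L → WithTop ℤ}

theorem v_eq_top (hv : IsNormValuation vL) {x : L} : vL x = ⊤ ↔ x = 0 := by
  constructor
  · intro h; by_contra hx; exact hv.2.1 x hx h
  · rintro rfl; exact hv.1

theorem v_one (hv : IsNormValuation vL) : vL 1 = 0 := by
  have h := hv.2.2.1 1 1
  rw [mul_one] at h
  obtain ⟨t, ht⟩ := WithTop.ne_top_iff_exists.mp (hv.2.1 1 one_ne_zero)
  rw [← ht] at h ⊢
  rw [← WithTop.coe_add] at h
  have : t = t + t := WithTop.coe_injective h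
  have : t = 0 := by omega
  simp [this]

theorem v_neg (hv : IsNormValuation vL) (x : L) : vL (-x) = vL x := by
  have h : vL (-1 * -1 : L) = vL (-1 : L) + vL (-1 : L) := hv.2.2.1 _ _
  rw [show ((-1 : L) * -1) = 1 by ring, v_one hv] at h
  obtain ⟨t, ht⟩ := WithTop.ne_top_iff_exists.mp (hv.2.1 (-1 : L) (by norm_num))
  rw [← ht, ← WithTop.coe_add] at h
  have h0 : t + t = 0 := by exact_mod_cast h.symm
  have ht0 : t = 0 := by omega
  have : vL (-x) = vL (-1 : L) + vL x := by rw [← hv.2.2.1]; ring_nf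
  rw [this, ← ht, ht0]
  simp

theorem v_inv (hv : IsNormValuation vL) {x : L} (hx : x ≠ 0) {t : ℤ}
    (ht : vL x = (t : WithTop ℤ)) : vL x⁻¹ = ((-t : ℤ) : WithTop ℤ) := by
  have h : vL (x * x⁻¹) = vL x + vL x⁻¹ := hv.2.2.1 _ _
  rw [mul_inv_cancel₀ hx, v_one hv, ht] at h
  obtain ⟨s, hs⟩ := WithTop.ne_top_iff_exists.mp (hv.2.1 x⁻¹ (inv_ne_zero hx))
  rw [← hs] at h ⊢
  rw [← WithTop.coe_add] at h
  have : (0 : ℤ) = t + s := WithTop.coe_injective h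
  have : s = -t := by omega
  rw [this]

theorem v_pow (hv : IsNormValuation vL) {x : L} {t : ℤ}
    (ht : vL x = (t : WithTop ℤ)) (k : ℕ) : vL (x ^ k) = ((k * t : ℤ) : WithTop ℤ) := by
  induction k with
  | zero => simpa using v_one hv
  | succ k ih =>
    rw [pow_succ, hv.2.2.1, ih, ht, ← WithTop.coe_add]
    congr 1
    push_cast
    ring

theorem v_zpow (hv : IsNormValuation vL) {x : L} {t : ℤ}
    (ht : vL x = (t : WithTop ℤ)) (w : ℤ) : vL (x ^ w) = ((w * t : ℤ) : WithTop ℤ) := by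
  have hx : x ≠ 0 := by
    intro h; rw [h, hv.1] at ht; exact (WithTop.coe_ne_top ht.symm).elim
  rcases Int.eq_nat_or_neg w with ⟨k, hk | hk⟩
  · subst hk; rw [zpow_natCast, v_pow hv ht k]
  · subst hk
    rw [zpow_neg, zpow_natCast]
    have hp := v_pow hv ht k
    have hxk : x ^ k ≠ 0 := pow_ne_zero _ hx
    rw [v_inv hv hxk hp]
    congr 1
    ring

theorem v_sum_ge (hv : IsNormValuation vL) {ι : Type*} (s : Finset ι) (f : ι → L)
    {c : WithTop ℤ} (h : ∀ i ∈ s, c ≤ vL (f i)) : c ≤ vL (∑ i ∈ s, f i) := by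
  classical
  induction s using Finset.induction_on with
  | empty => simp [hv.1]
  | @insert a s' hx ih =>
    rw [Finset.sum_insert hx]
    refine le_trans ?_ (hv.2.2.2.1 _ _)
    exact le_min (h a (Finset.mem_insert_self _ _)) (ih fun i hi => h i (Finset.mem_insert_of_mem hi))

theorem v_add_left (hv : IsNormValuation vL) {x y : L} (h : vL x < vL y) :
    vL (x + y) = vL x := by
  refine le_antisymm ?_ (le_trans (le_min le_rfl h.le) (hv.2.2.2.1 x y))
  have h2 : vL x = vL ((x + y) + -y) := by rw [add_neg_cancel_right]
  have h3 : min (vL (x+y)) (vL (-y)) ≤ vL x := h2 ▸ hv.2.2.2.1 (x+y) (-y)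
  rw [v_neg hv] at h3
  rcases min_le_iff.mp h3 with h4 | h4
  · exact h4
  · exact absurd h4 (not_le.mpr h)

theorem v_sum_eq (hv : IsNormValuation vL) {ι : Type*} (s : Finset ι) (f : ι → L)
    {i0 : ι} (hi0 : i0 ∈ s) (hmin : ∀ i ∈ s, i ≠ i0 → vL (f i0) < vL (f i)) :
    vL (∑ i ∈ s, f i) = vL (f i0) := by
  classical
  rw [← Finset.add_sum_erase s f hi0]
  rcases eq_or_ne (vL (f i0)) ⊤ with htop | hne
  · have hempty : s.erase i0 = ∅ := by
      rw [Finset.eq_empty_iff_forall_notMem]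
      intro j hj
      exact absurd (htop ▸ hmin j (Finset.mem_of_mem_erase hj) (Finset.ne_of_mem_erase hj))
        not_top_lt
    rw [hempty]; simp
  · apply v_add_left hv
    obtain ⟨t, ht⟩ := WithTop.ne_top_iff_exists.mp hne
    have hbound : ∀ i ∈ s.erase i0, ((t+1 : ℤ) : WithTop ℤ) ≤ vL (f i) := by
      intro i hi
      have h5 := hmin i (Finset.mem_of_mem_erase hi) (Finset.ne_of_mem_erase hi)
      rw [← ht] at h5
      rcases eq_or_ne (vL (f i)) ⊤ with h | h
      · rw [h]; exact le_top
      · obtain ⟨u, hu⟩ := WithTop.ne_top_iff_exists.mp h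
        rw [← hu] at h5 ⊢
        rw [WithTop.coe_le_coe]
        have : t < u := by exact_mod_cast h5
        omega
    have h6 := v_sum_ge hv (s.erase i0) f hbound
    rw [← ht]
    calc (↑t : WithTop ℤ) < ↑(t+1) := by rw [WithTop.coe_lt_coe]; omega
      _ ≤ _ := h6

theorem v_sum_le_of_distinct (hv : IsNormValuation vL) {ι : Type*} (s : Finset ι) (f : ι → L)
    (hdist : ∀ i ∈ s, ∀ j ∈ s, i ≠ j → vL (f i) = vL (f j) → vL (f i) = ⊤) :
    ∀ i ∈ s, vL (∑ j ∈ s, f j) ≤ vL (f i) := by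
  classical
  intro i hi
  obtain ⟨i0, hi0, hmin⟩ := s.exists_min_image (fun j => vL (f j)) ⟨i, hi⟩
  rcases eq_or_ne (vL (f i0)) ⊤ with htop | hne
  · have hall : ∀ j ∈ s, f j = 0 := by
      intro j hj
      have h7 : (⊤ : WithTop ℤ) ≤ vL (f j) := by rw [← htop]; exact hmin j hj
      exact (v_eq_top hv).mp (top_le_iff.mp h7)
    rw [Finset.sum_congr rfl hall, Finset.sum_const_zero, hv.1]
    exact le_of_eq ((v_eq_top hv).mpr (hall i hi)).symm
  · have : vL (∑ j ∈ s, f j) = vL (f i0) := by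
      apply v_sum_eq hv s f hi0
      intro j hj hne'
      rcases lt_or_eq_of_le (hmin j hj) with h | h
      · exact h
      · exact absurd (hdist i0 hi0 j hj (Ne.symm hne') h) hne
    rw [this]; exact hmin i hi

end S5


set_option linter.unusedSectionVars false

namespace S5

section Alg

variable {p n : ℕ} {K L : Type} [Field K] [Field L] [Algebra K L]
  [FiniteDimensional K L] {vL : L → WithTop ℤ} {πL : L}

theorem v_prod (hv : IsNormValuation vL) {ι : Type*} (s : Finset ι) (f : ι → L) (t : ι → ℤ)
    (h : ∀ i ∈ s, vL (f i) = ((t i : ℤ) : WithTop ℤ)) :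
    vL (∏ i ∈ s, f i) = ((∑ i ∈ s, t i : ℤ) : WithTop ℤ) := by
  classical
  induction s using Finset.induction_on with
  | empty => simpa using v_one hv
  | @insert a s' ha ih =>
    rw [Finset.prod_insert ha, Finset.sum_insert ha, hv.2.2.1,
      h a (Finset.mem_insert_self _ _), ih (fun i hi => h i (Finset.mem_insert_of_mem hi)),
      ← WithTop.coe_add]

theorem exists_kappa [IsGalois K L] (hv : IsNormValuation vL)
    (hgal : ∀ (σ : L ≃ₐ[K] L) (x : L), vL (σ x) = vL x) (hπ : vL πL = 1) :
    ∃ κ : K, κ ≠ 0 ∧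
      vL (algebraMap K L κ) = ((Fintype.card (L ≃ₐ[K] L) : ℤ) : WithTop ℤ) := by
  have h1 : algebraMap K L (Algebra.norm K πL) = ∏ σ : L ≃ₐ[K] L, σ πL :=
    Algebra.norm_eq_prod_automorphisms K πL
  have h2 : vL (algebraMap K L (Algebra.norm K πL)) =
      ((∑ _σ : L ≃ₐ[K] L, (1:ℤ) : ℤ) : WithTop ℤ) := by
    rw [h1]
    exact v_prod hv _ _ _ (fun σ _ => by rw [hgal]; exact_mod_cast hπ)
  have hcard : ((∑ _σ : L ≃ₐ[K] L, (1:ℤ) : ℤ) : WithTop ℤ)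
      = ((Fintype.card (L ≃ₐ[K] L) : ℤ) : WithTop ℤ) := by
    congr 1
    simp
  refine ⟨Algebra.norm K πL, ?_, h2.trans hcard⟩
  intro h0
  rw [h0, map_zero, hv.1] at h2
  exact (WithTop.top_ne_coe h2).elim

theorem pmul_add_ne {P m1 m2 j1 j2 : ℤ} (hP : 0 < P) (hj1 : 0 ≤ j1) (hj1' : j1 < P)
    (hj2 : 0 ≤ j2) (hj2' : j2 < P) (hne : j1 ≠ j2) : P * m1 + j1 ≠ P * m2 + j2 := by
  intro h
  have key : j1 - j2 = P * (m2 - m1) := by linear_combination h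
  rcases lt_trichotomy (m2 - m1) 0 with hm | hm | hm
  · have : P * (m2 - m1) ≤ P * (-1) := by
      apply mul_le_mul_of_nonneg_left (by omega) hP.le
    nlinarith
  · rw [hm, mul_zero] at key; omega
  · have : P * 1 ≤ P * (m2 - m1) := by
      apply mul_le_mul_of_nonneg_left (by omega) hP.le
    nlinarith

/-- valuations of distinct monomials `k * π^j`, `0 ≤ j < p^n`, are distinct or `⊤`. -/
theorem v_monomial_dist (hv : IsNormValuation vL)
    (hval3 : ∀ k : K, k ≠ 0 → ∃ m : ℤ, vL (algebraMap K L k) = ((p ^ n * m : ℤ) : WithTop ℤ))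
    (hπ : vL πL = 1) (hp : 0 < p) (k1 k2 : K) {j1 j2 : ℕ}
    (hj1 : j1 < p ^ n) (hj2 : j2 < p ^ n) (hne : j1 ≠ j2)
    (heq : vL (algebraMap K L k1 * πL ^ j1) = vL (algebraMap K L k2 * πL ^ j2)) :
    vL (algebraMap K L k1 * πL ^ j1) = ⊤ := by
  rcases eq_or_ne k1 0 with rfl | h1
  · simp [hv.1]
  rcases eq_or_ne k2 0 with rfl | h2
  · rw [heq]; simp [hv.1]
  exfalso
  obtain ⟨m1, hm1⟩ := hval3 k1 h1
  obtain ⟨m2, hm2⟩ := hval3 k2 h2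
  have hπ' : vL πL = ((1 : ℤ) : WithTop ℤ) := by exact_mod_cast hπ
  rw [hv.2.2.1, hm1, v_pow hv hπ' j1, ← WithTop.coe_add] at heq
  rw [hv.2.2.1, hm2, v_pow hv hπ' j2, ← WithTop.coe_add] at heq
  have heq' : (p:ℤ) ^ n * m1 + (j1 : ℤ) * 1 = (p:ℤ) ^ n * m2 + (j2 : ℤ) * 1 :=
    WithTop.coe_injective heq
  have hP : (0:ℤ) < (p:ℤ) ^ n := by positivity
  have heq'' : (p:ℤ) ^ n * m1 + (j1:ℤ) = (p:ℤ) ^ n * m2 + (j2:ℤ) := by linarith [heq']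
  exact pmul_add_ne hP (Int.ofNat_nonneg j1) (by exact_mod_cast hj1)
    (Int.ofNat_nonneg j2) (by exact_mod_cast hj2) (by exact_mod_cast hne) heq''

theorem exists_basis_pow [IsGalois K L] (hv : IsNormValuation vL)
    (hval3 : ∀ k : K, k ≠ 0 → ∃ m : ℤ, vL (algebraMap K L k) = ((p ^ n * m : ℤ) : WithTop ℤ))
    (hπ : vL πL = 1) (hp : 0 < p) (hdeg : Nat.card (L ≃ₐ[K] L) = p ^ n) :
    ∃ bas : Module.Basis (Fin (p ^ n)) K L, ∀ j : Fin (p ^ n), bas j = πL ^ (j : ℕ) := by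
  have hfr : Module.finrank K L = p ^ n := by
    rw [← IsGalois.card_aut_eq_finrank, hdeg]
  have li : LinearIndependent K (fun j : Fin (p ^ n) => πL ^ (j : ℕ)) := by
    classical
    rw [Fintype.linearIndependent_iff]
    intro g hg
    by_contra hcon
    push_neg at hcon
    obtain ⟨i1, hi1⟩ := hcon
    set f : Fin (p ^ n) → L := fun j => algebraMap K L (g j) * πL ^ (j : ℕ) with hf
    have hsum : ∑ j, f j = 0 := by
      rw [← hg]
      exact Finset.sum_congr rfl fun j _ => (Algebra.smul_def _ _).symm
    have hne : (Finset.univ.filter (fun j => g j ≠ 0)).Nonempty :=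
      ⟨i1, by simp [hi1]⟩
    obtain ⟨i0, hi0, hmin⟩ := Finset.exists_min_image _ (fun j => vL (f j)) hne
    have hi0' : g i0 ≠ 0 := (Finset.mem_filter.mp hi0).2
    have hfne : vL (f i0) ≠ ⊤ := by
      apply hv.2.1
      apply mul_ne_zero
      · simpa using hi0'
      · apply pow_ne_zero
        intro h0
        rw [h0, hv.1] at hπ
        simp at hπ
    have : vL (∑ j, f j) = vL (f i0) := by
      apply v_sum_eq hv _ _ (Finset.mem_univ i0)
      intro j _ hj
      rcases eq_or_ne (g j) 0 with h0 | h0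
      · have : f j = 0 := by rw [hf]; simp [h0]
        rw [this, hv.1]
        exact lt_top_iff_ne_top.mpr hfne
      · have hle := hmin j (Finset.mem_filter.mpr ⟨Finset.mem_univ j, h0⟩)
        rcases lt_or_eq_of_le hle with h | h
        · exact h
        · exact absurd (v_monomial_dist hv hval3 hπ hp (g i0) (g j) i0.2 j.2
            (fun he => hj (Fin.ext he.symm)) h) hfne
    rw [hsum, hv.1] at this
    exact hfne this.symm
  have hcard : Fintype.card (Fin (p ^ n)) = Module.finrank K L := by
    rw [Fintype.card_fin, hfr]
  haveI : Nonempty (Fin (p ^ n)) := ⟨⟨0, pow_pos hp n⟩⟩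
  exact ⟨basisOfLinearIndependentOfCardEqFinrank li hcard,
    fun j => congrFun (coe_basisOfLinearIndependentOfCardEqFinrank li hcard) j⟩

theorem v_repr_le (hv : IsNormValuation vL)
    (hval3 : ∀ k : K, k ≠ 0 → ∃ m : ℤ, vL (algebraMap K L k) = ((p ^ n * m : ℤ) : WithTop ℤ))
    (hπ : vL πL = 1) (hp : 0 < p)
    (bas : Module.Basis (Fin (p ^ n)) K L) (hbas : ∀ j : Fin (p ^ n), bas j = πL ^ (j : ℕ))
    (u : L) (j : Fin (p ^ n)) :
    vL u ≤ vL (algebraMap K L (bas.repr u j) * πL ^ (j : ℕ)) := by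
  have hu : u = ∑ i : Fin (p ^ n), algebraMap K L (bas.repr u i) * πL ^ (i : ℕ) := by
    conv_lhs => rw [← Module.Basis.sum_repr bas u]
    refine Finset.sum_congr rfl fun i _ => ?_
    rw [hbas, Algebra.smul_def]
  have key := v_sum_le_of_distinct hv Finset.univ
    (fun i : Fin (p ^ n) => algebraMap K L (bas.repr u i) * πL ^ (i : ℕ))
    (fun i _ i' _ hne heq => v_monomial_dist hv hval3 hπ hp _ _ i.2 i'.2
      (fun he => hne (Fin.ext he)) heq)
    j (Finset.mem_univ j)
  rw [← hu] at key
  exact key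

theorem trace_lb (hv : IsNormValuation vL) {d : ℤ}
    (hd1 : ∀ x : L, ((-d : ℤ) : WithTop ℤ) ≤ vL x →
      (0 : WithTop ℤ) ≤ vL (algebraMap K L (Algebra.trace K L x)))
    {κ : K} {P : ℤ}
    (hκ : vL (algebraMap K L κ) = ((P : ℤ) : WithTop ℤ))
    (x : L) (W : ℤ) (hx : ((P * W - d : ℤ) : WithTop ℤ) ≤ vL x) :
    ((P * W : ℤ) : WithTop ℤ) ≤ vL (algebraMap K L (Algebra.trace K L x)) := by
  have hzw : vL (algebraMap K L (κ ^ (-W))) = ((-W * P : ℤ) : WithTop ℤ) := by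
    rw [map_zpow₀]; exact v_zpow hv hκ (-W)
  have hx' : ((-d : ℤ) : WithTop ℤ) ≤ vL (algebraMap K L (κ ^ (-W)) * x) := by
    rw [hv.2.2.1, hzw]
    calc ((-d : ℤ) : WithTop ℤ)
        = ((-W * P : ℤ) : WithTop ℤ) + ((P * W - d : ℤ) : WithTop ℤ) := by
          rw [← WithTop.coe_add]; congr 1; ring
      _ ≤ _ := add_le_add_right hx _
  have h0 := hd1 _ hx'
  have htr : algebraMap K L (Algebra.trace K L (algebraMap K L (κ ^ (-W)) * x))
      = algebraMap K L (κ ^ (-W)) * algebraMap K L (Algebra.trace K L x) := by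
    rw [show algebraMap K L (κ ^ (-W)) * x = κ ^ (-W) • x from (Algebra.smul_def _ _).symm,
      LinearMap.map_smul, smul_eq_mul, map_mul]
  rw [htr, hv.2.2.1, hzw] at h0
  calc ((P * W : ℤ) : WithTop ℤ) = ((P * W : ℤ) : WithTop ℤ) + 0 := (add_zero _).symm
    _ ≤ ((P * W : ℤ) : WithTop ℤ)
        + (((-W * P : ℤ) : WithTop ℤ) + vL (algebraMap K L (Algebra.trace K L x))) :=
          add_le_add_right h0 _
    _ = ((P * W + -W * P : ℤ) : WithTop ℤ) + vL (algebraMap K L (Algebra.trace K L x)) := by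
          rw [← add_assoc, ← WithTop.coe_add]
    _ = vL (algebraMap K L (Algebra.trace K L x)) := by
          rw [show (P * W + -W * P : ℤ) = 0 by ring]
          exact zero_add _

theorem diff_witness (hv : IsNormValuation vL)
    (hval3 : ∀ k : K, k ≠ 0 → ∃ m : ℤ, vL (algebraMap K L k) = ((p ^ n * m : ℤ) : WithTop ℤ))
    {d : ℤ} (hd : IsDifferentExp K L vL d)
    {κ : K} (hκ : vL (algebraMap K L κ) = ((((p ^ n : ℕ)) : ℤ) : WithTop ℤ)) (hp : 0 < p) :
    ∃ x0 : L, vL x0 = ((-d - 1 : ℤ) : WithTop ℤ) ∧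
      vL (algebraMap K L (Algebra.trace K L x0)) = ((-((p ^ n : ℕ) : ℤ) : ℤ) : WithTop ℤ) := by
  have hP1 : 1 ≤ ((p ^ n : ℕ) : ℤ) := by exact_mod_cast Nat.one_le_iff_ne_zero.mpr (pow_ne_zero n hp.ne')
  have hnot : d + 1 ∉ {m : ℤ | ∀ x : L, ((-m : ℤ) : WithTop ℤ) ≤ vL x →
      (0 : WithTop ℤ) ≤ vL (algebraMap K L (Algebra.trace K L x))} := by
    intro h
    have := hd.2 h
    omega
  simp only [Set.mem_setOf_eq, not_forall] at hnot
  obtain ⟨x0, hx0le, hx0tr⟩ := hnot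
  rw [not_le] at hx0tr
  have hx0ne : x0 ≠ 0 := by
    intro h
    rw [h, map_zero, map_zero, hv.1] at hx0tr
    exact not_top_lt hx0tr
  obtain ⟨s, hs⟩ := WithTop.ne_top_iff_exists.mp (hv.2.1 x0 hx0ne)
  have hsge : -(d+1) ≤ s := by
    rw [← hs] at hx0le
    exact_mod_cast hx0le
  have hslt : s < -d := by
    by_contra hcon
    push_neg at hcon
    have : ((-d : ℤ) : WithTop ℤ) ≤ vL x0 := by
      rw [← hs]; exact_mod_cast hcon
    exact absurd (hd.1 x0 this) (not_le.mpr hx0tr)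
  have hseq : s = -d - 1 := by omega
  have htrne : Algebra.trace K L x0 ≠ 0 := by
    intro h
    rw [h, map_zero, hv.1] at hx0tr
    exact not_top_lt hx0tr
  obtain ⟨m0, hm0⟩ := hval3 _ htrne
  have hm0' : ((p ^ n : ℕ) : ℤ) * m0 < 0 := by
    rw [hm0] at hx0tr
    exact_mod_cast hx0tr
  have hlb := trace_lb hv hd.1 hκ x0 (-1) (by
    rw [← hs, WithTop.coe_le_coe]; omega)
  rw [hm0] at hlb
  have hlb' : ((p ^ n : ℕ) : ℤ) * (-1) ≤ ((p ^ n : ℕ) : ℤ) * m0 := by exact_mod_cast hlb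
  have hm0neg : m0 ≤ -1 := by nlinarith
  have hm0ge : -1 ≤ m0 := by nlinarith
  have hm0eq : m0 = -1 := le_antisymm hm0neg hm0ge
  refine ⟨x0, by rw [← hs, hseq], ?_⟩
  rw [hm0, hm0eq]
  norm_num

theorem exists_dual [IsGalois K L] (hp : 0 < p)
    (hfr0 : Module.finrank K L = p ^ n)
    (bas : Module.Basis (Fin (p ^ n)) K L) (hbas : ∀ j : Fin (p ^ n), bas j = πL ^ (j : ℕ))
    (j0 : Fin (p ^ n)) (val : K) :
    ∃ y : L, ∀ j : Fin (p ^ n),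
      Algebra.trace K L (πL ^ (j : ℕ) * y) = if j = j0 then val else 0 := by
  classical
  set Φ : L →ₗ[K] (Fin (p ^ n) → K) :=
    LinearMap.pi (fun j : Fin (p ^ n) =>
      (Algebra.trace K L) ∘ₗ (LinearMap.mulLeft K (πL ^ (j : ℕ)))) with hΦ
  have hΦapp : ∀ (y : L) (j : Fin (p ^ n)),
      Φ y j = Algebra.trace K L (πL ^ (j : ℕ) * y) := by
    intro y j
    rw [hΦ, LinearMap.pi_apply, LinearMap.comp_apply, LinearMap.mulLeft_apply]
  have hinj : Function.Injective Φ := by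
    rw [← LinearMap.ker_eq_bot, LinearMap.ker_eq_bot']
    intro y hy
    have hy' : ∀ j : Fin (p ^ n), Algebra.trace K L (πL ^ (j : ℕ) * y) = 0 := by
      intro j
      rw [← hΦapp y j, hy]
      rfl
    apply (traceForm_nondegenerate K L).1 y
    intro z
    rw [Algebra.traceForm_apply]
    have hz : y * z = ∑ j : Fin (p ^ n), bas.repr z j • (πL ^ (j : ℕ) * y) := by
      conv_lhs => rw [← Module.Basis.sum_repr bas z]
      rw [Finset.mul_sum]
      refine Finset.sum_congr rfl fun j _ => ?_
      rw [hbas, Algebra.smul_def, Algebra.smul_def]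
      ring
    rw [hz, map_sum]
    refine Finset.sum_eq_zero fun j _ => ?_
    rw [LinearMap.map_smul, hy' j, smul_zero]
  have hfr : Module.finrank K L = Module.finrank K (Fin (p ^ n) → K) := by
    rw [Module.finrank_pi, Fintype.card_fin, hfr0]
  have hsurj : Function.Surjective Φ :=
    (LinearMap.injective_iff_surjective_of_finrank_eq_finrank hfr).mp hinj
  obtain ⟨y, hy⟩ := hsurj (Pi.single j0 val)
  refine ⟨y, fun j => ?_⟩
  rw [← hΦapp y j, hy]
  rcases eq_or_ne j j0 with rfl | hne
  · rw [Pi.single_eq_same, if_pos rfl]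
  · rw [Pi.single_eq_of_ne hne, if_neg hne]

theorem phi_apply [IsGalois K L] (β : L ⊗[K] L) (σ : L ≃ₐ[K] L) :
    phi K L β σ = phiAux K L σ β := by
  rw [phi, LinearMap.sum_apply]
  rw [Finsupp.finset_sum_apply]
  rw [Finset.sum_eq_single_of_mem σ (Finset.mem_univ σ)]
  · rw [LinearMap.comp_apply, Finsupp.lsingle_apply, Finsupp.single_eq_same]
  · intro τ _ hτ
    rw [LinearMap.comp_apply, Finsupp.lsingle_apply, Finsupp.single_eq_of_ne' hτ]

theorem actK_eq [IsGalois K L] (ξ : MonoidAlgebra K (L ≃ₐ[K] L)) (β : L ⊗[K] L)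
    (c : ℕ → L) (hβ : β = ∑ j ∈ Finset.range (p ^ n), c j ⊗ₜ[K] (πL ^ j))
    (hphiβ : ∀ σ : L ≃ₐ[K] L, phi K L β σ = algebraMap K L (ξ.coeff σ)) (y : L) :
    actK K L ξ y = ∑ j ∈ Finset.range (p ^ n),
      c j * algebraMap K L (Algebra.trace K L (πL ^ j * y)) := by
  classical
  have hphi : ∀ σ : L ≃ₐ[K] L, algebraMap K L (ξ.coeff σ)
      = ∑ j ∈ Finset.range (p ^ n), c j * σ (πL ^ j) := by
    intro σ
    rw [← hphiβ σ, phi_apply, hβ, map_sum]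
    refine Finset.sum_congr rfl fun j _ => ?_
    rw [phiAux, TensorProduct.lift.tmul, LinearMap.compl₂_apply, LinearMap.mul_apply']
    rfl
  have h1 : actK K L ξ y = ∑ σ : L ≃ₐ[K] L, algebraMap K L (ξ.coeff σ) * σ y := by
    rw [actK]
    exact Finsupp.sum_fintype _ _ (fun σ => by rw [map_zero, zero_mul])
  rw [h1]
  have h2 : ∀ σ : L ≃ₐ[K] L, algebraMap K L (ξ.coeff σ) * σ y
      = ∑ j ∈ Finset.range (p ^ n), c j * σ (πL ^ j * y) := by
    intro σ
    rw [hphi σ, Finset.sum_mul]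
    refine Finset.sum_congr rfl fun j _ => ?_
    rw [map_mul]
    ring
  rw [Finset.sum_congr rfl (fun σ _ => h2 σ), Finset.sum_comm]
  refine Finset.sum_congr rfl fun j _ => ?_
  rw [← Finset.mul_sum, trace_eq_sum_automorphisms]

theorem col_val_zero (hv : IsNormValuation vL)
    {A : ℤ → ℕ → K} {N : ℕ → ℤ} {c : ℕ → L} {j : ℕ}
    (happ : ∀ m : ℤ, (m : WithTop ℤ) <
      vL (c j - ∑ i ∈ Finset.Icc (N j) m, algebraMap K L (A i j) * πL ^ (i : ℤ)))
    (hzero : ∀ i, A i j = 0) : c j = 0 := by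
  by_contra hc
  obtain ⟨t, ht⟩ := WithTop.ne_top_iff_exists.mp (hv.2.1 _ hc)
  have := happ t
  rw [Finset.sum_eq_zero (fun i _ => by rw [hzero i, map_zero, zero_mul]), sub_zero, ← ht] at this
  exact absurd this (lt_irrefl _)

theorem col_val_min (hv : IsNormValuation vL) {𝒯 : Set K} (h𝒯 : IsTeichmuller K L vL 𝒯)
    (hπ : vL πL = 1)
    {A : ℤ → ℕ → K} (hT : ∀ (i : ℤ) (j : ℕ), A i j ∈ 𝒯) {N : ℕ → ℤ} {c : ℕ → L} {j : ℕ}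
    (hN : ∀ i : ℤ, i < N j → A i j = 0)
    (happ : ∀ m : ℤ, (m : WithTop ℤ) <
      vL (c j - ∑ i ∈ Finset.Icc (N j) m, algebraMap K L (A i j) * πL ^ (i : ℤ)))
    {i0 : ℤ} (hi0 : A i0 j ≠ 0) (hmin : ∀ i, A i j ≠ 0 → i0 ≤ i) :
    vL (c j) = (i0 : WithTop ℤ) := by
  have hNle : N j ≤ i0 := by
    by_contra h
    exact hi0 (hN i0 (by omega))
  have hπ' : vL πL = ((1 : ℤ) : WithTop ℤ) := by exact_mod_cast hπ
  have hsum : ∑ i ∈ Finset.Icc (N j) i0, algebraMap K L (A i j) * πL ^ (i : ℤ)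
      = algebraMap K L (A i0 j) * πL ^ (i0 : ℤ) := by
    apply Finset.sum_eq_single_of_mem i0 (Finset.mem_Icc.mpr ⟨hNle, le_refl i0⟩)
    intro i hi hne
    have : A i j = 0 := by
      by_contra hA
      exact hne (le_antisymm (Finset.mem_Icc.mp hi).2 (hmin i hA))
    rw [this, map_zero, zero_mul]
  have hval : vL (algebraMap K L (A i0 j) * πL ^ (i0 : ℤ)) = (i0 : WithTop ℤ) := by
    rw [hv.2.2.1, h𝒯.2.1 _ (hT i0 j) hi0, v_zpow hv hπ' i0, zero_add, mul_one]
  have hcj : c j = (algebraMap K L (A i0 j) * πL ^ (i0 : ℤ))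
      + (c j - ∑ i ∈ Finset.Icc (N j) i0, algebraMap K L (A i j) * πL ^ (i : ℤ)) := by
    rw [hsum]; ring
  rw [hcj, v_add_left hv, hval]
  rw [hval]
  exact happ i0

theorem key_lb [IsGalois K L] (hv : IsNormValuation vL)
    (hval3 : ∀ k : K, k ≠ 0 → ∃ m : ℤ, vL (algebraMap K L k) = ((p ^ n * m : ℤ) : WithTop ℤ))
    (hπ : vL πL = 1) (hp : 0 < p) {d : ℤ}
    {κ : K} (hκ0 : κ ≠ 0)
    (hκ : vL (algebraMap K L κ) = ((((p ^ n : ℕ) : ℤ) : ℤ) : WithTop ℤ))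
    {x0 : L} (hx0v : vL x0 = ((-d - 1 : ℤ) : WithTop ℤ))
    (hx0t : vL (algebraMap K L (Algebra.trace K L x0)) = ((-((p ^ n : ℕ) : ℤ) : ℤ) : WithTop ℤ))
    (bas : Module.Basis (Fin (p ^ n)) K L) (hbas : ∀ j : Fin (p ^ n), bas j = πL ^ (j : ℕ))
    {b : ℤ} (kf : ℕ → ℤ)
    (hkf : ∀ j : ℕ, (j : ℤ) - b ≤ ((p ^ n : ℕ) : ℤ) * kf j ∧
      ((p ^ n : ℕ) : ℤ) * kf j ≤ (j : ℤ) - b + ((p ^ n : ℕ) : ℤ) - 1)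
    (y : L)
    (hy : ∀ j : ℕ, j < p ^ n → ((((p ^ n : ℕ) : ℤ) * kf j : ℤ) : WithTop ℤ) ≤
      vL (algebraMap K L (Algebra.trace K L (πL ^ j * y)))) :
    ((-b - d + ((p ^ n : ℕ) : ℤ) - 1 : ℤ) : WithTop ℤ) ≤ vL y := by
  classical
  set P : ℤ := ((p ^ n : ℕ) : ℤ) with hPdef
  have hPpos : 0 < P := by rw [hPdef]; exact_mod_cast pow_pos hp n
  by_contra hcon
  push_neg at hcon
  have hy0 : y ≠ 0 := by
    intro h
    rw [h, hv.1] at hcon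
    exact not_top_lt hcon
  obtain ⟨s, hs0⟩ := WithTop.ne_top_iff_exists.mp (hv.2.1 y hy0)
  have hs : vL y = (s : WithTop ℤ) := hs0.symm
  have hslt : s < -b - d + P - 1 := by
    rw [hs] at hcon
    exact_mod_cast hcon
  set W : ℤ := (s + d).ediv P with hWdef
  set ρ : ℤ := (s + d).emod P with hρdef
  have hedm : P * W + ρ = s + d := Int.mul_ediv_add_emod (s + d) P
  have hρ0 : 0 ≤ ρ := Int.emod_nonneg _ hPpos.ne'
  have hρP : ρ < P := Int.emod_lt_of_pos _ hPpos
  have hπ' : vL πL = ((1 : ℤ) : WithTop ℤ) := by exact_mod_cast hπ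
  -- the probe element u
  set u : L := algebraMap K L (κ ^ (W + 1)) * x0 * y⁻¹ with hudef
  have hκzp : vL (algebraMap K L (κ ^ (W + 1))) = (((W + 1) * P : ℤ) : WithTop ℤ) := by
    rw [map_zpow₀]; exact v_zpow hv hκ (W + 1)
  have hvu : vL u = ((P - 1 - ρ : ℤ) : WithTop ℤ) := by
    rw [hudef, hv.2.2.1, hv.2.2.1, hκzp, hx0v, v_inv hv hy0 hs,
      ← WithTop.coe_add, ← WithTop.coe_add]
    congr 1
    have hexp : (W + 1) * P = P * W + P := by ring
    omega
  -- trace of y * u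
  have hyu : y * u = algebraMap K L (κ ^ (W + 1)) * x0 := by
    rw [hudef]
    field_simp
  have htru : vL (algebraMap K L (Algebra.trace K L (y * u)))
      = ((P * W : ℤ) : WithTop ℤ) := by
    have h1 : Algebra.trace K L (y * u) = κ ^ (W + 1) * Algebra.trace K L x0 := by
      rw [hyu, show algebraMap K L (κ ^ (W + 1)) * x0 = κ ^ (W + 1) • x0 from
        (Algebra.smul_def _ _).symm, LinearMap.map_smul, smul_eq_mul]
    rw [h1, map_mul, hv.2.2.1, hκzp, hx0t, ← WithTop.coe_add]
    congr 1
    have hexp : (W + 1) * P = P * W + P := by ring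
    have hPP : P = ((p ^ n : ℕ) : ℤ) := hPdef
    omega
  -- expand u over the basis
  have hyu2 : y * u = ∑ jf : Fin (p ^ n), bas.repr u jf • (πL ^ (jf : ℕ) * y) := by
    conv_lhs => rw [← Module.Basis.sum_repr bas u]
    rw [Finset.mul_sum]
    refine Finset.sum_congr rfl fun jf _ => ?_
    rw [hbas, Algebra.smul_def, Algebra.smul_def]
    ring
  have htr2 : algebraMap K L (Algebra.trace K L (y * u))
      = ∑ jf : Fin (p ^ n), algebraMap K L (bas.repr u jf)
          * algebraMap K L (Algebra.trace K L (πL ^ (jf : ℕ) * y)) := by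
    rw [hyu2, map_sum, map_sum]
    refine Finset.sum_congr rfl fun jf _ => ?_
    rw [LinearMap.map_smul, smul_eq_mul, map_mul]
  -- each term has valuation ≥ P * (W + 1)
  have hterm : ∀ jf : Fin (p ^ n), ((P * (W + 1) : ℤ) : WithTop ℤ) ≤
      vL (algebraMap K L (bas.repr u jf)
        * algebraMap K L (Algebra.trace K L (πL ^ (jf : ℕ) * y))) := by
    intro jf
    rcases eq_or_ne (bas.repr u jf) 0 with h0 | h0
    · rw [h0, map_zero, zero_mul, hv.1]
      exact le_top
    obtain ⟨e, he⟩ := hval3 _ h0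
    have hrepr := v_repr_le hv hval3 hπ hp bas hbas u jf
    rw [hvu, hv.2.2.1, he, v_pow hv hπ' (jf : ℕ), ← WithTop.coe_add] at hrepr
    have hrepr' : P - 1 - ρ ≤ P * e + (jf : ℤ) * 1 := by exact_mod_cast hrepr
    have hjfP : (jf : ℤ) < P := by
      have := jf.2
      rw [hPdef]
      exact_mod_cast this
    have hjf0 : (0 : ℤ) ≤ (jf : ℤ) := Int.ofNat_nonneg _
    -- e ≥ 0, and e ≥ 1 when jf < P - 1 - ρ
    have he0 : 0 ≤ e := by
      by_contra hce
      push_neg at hce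
      have : P * e ≤ P * (-1) := mul_le_mul_of_nonneg_left (by omega) hPpos.le
      omega
    have hW1 : P * W ≤ (P - 1 - ρ) - b - 1 := by omega
    have hexp1 : P * (W + 1) = P * W + P := by ring
    have hexp2 : P * (W - 1) = P * W - P := by ring
    have hbig : P * (W + 1) ≤ P * e + P * kf (jf : ℕ) := by
      rcases le_or_gt (P - 1 - ρ) (jf : ℤ) with hc | hc
      · -- jf ≥ r*: kf ≥ W + 1
        have h1 : P * W + 1 ≤ P * kf (jf : ℕ) := by
          have := (hkf (jf : ℕ)).1
          omega
        have h2 : W < kf (jf : ℕ) := lt_of_mul_lt_mul_left (by omega) hPpos.le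
        have h3 : P * (W + 1) ≤ P * kf (jf : ℕ) :=
          mul_le_mul_of_nonneg_left (by omega) hPpos.le
        have h4 : 0 ≤ P * e := mul_nonneg hPpos.le he0
        omega
      · -- jf < r*: e ≥ 1, kf ≥ W
        have he1 : 1 ≤ e := by
          by_contra hce
          push_neg at hce
          have : P * e ≤ P * 0 := mul_le_mul_of_nonneg_left (by omega) hPpos.le
          omega
        have h1 : P * (W - 1) < P * kf (jf : ℕ) := by
          have := (hkf (jf : ℕ)).1
          omega
        have h2 : W - 1 < kf (jf : ℕ) := lt_of_mul_lt_mul_left h1 hPpos.le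
        have h3 : P * W ≤ P * kf (jf : ℕ) :=
          mul_le_mul_of_nonneg_left (by omega) hPpos.le
        have h4 : P * 1 ≤ P * e := mul_le_mul_of_nonneg_left he1 hPpos.le
        omega
    have hkub := hy (jf : ℕ) jf.2
    calc ((P * (W + 1) : ℤ) : WithTop ℤ)
        ≤ ((P * e + P * kf (jf : ℕ) : ℤ) : WithTop ℤ) := WithTop.coe_le_coe.mpr hbig
      _ = ((P * e : ℤ) : WithTop ℤ) + ((P * kf (jf : ℕ) : ℤ) : WithTop ℤ) := by
          rw [← WithTop.coe_add]
      _ ≤ ((P * e : ℤ) : WithTop ℤ)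
          + vL (algebraMap K L (Algebra.trace K L (πL ^ (jf : ℕ) * y))) :=
          add_le_add_right hkub _
      _ = vL (algebraMap K L (bas.repr u jf))
          + vL (algebraMap K L (Algebra.trace K L (πL ^ (jf : ℕ) * y))) := by
          rw [he]
          congr 2
      _ = _ := (hv.2.2.1 _ _).symm
  have hsum := v_sum_ge hv Finset.univ _ (fun jf _ => hterm jf)
  rw [← htr2, htru, WithTop.coe_le_coe] at hsum
  nlinarith

end Alg

end S5

/-- Corollary 3.6 (shiftineq). -/
theorem stmt_5 (p n : ℕ) (hp : p.Prime) (hn : 1 ≤ n)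
    (K L : Type) [Field K] [Field L] [Algebra K L] [IsGalois K L] [FiniteDimensional K L]
    (hdeg : Nat.card (L ≃ₐ[K] L) = p ^ n)
    (vL : L → WithTop ℤ) (hctx : LocalCtx p n K L vL)
    (πL : L) (hπ : vL πL = 1) (𝒯 : Set K) (h𝒯 : IsTeichmuller K L vL 𝒯)
    (d : ℤ) (hd : IsDifferentExp K L vL d)
    (ξ : MonoidAlgebra K (L ≃ₐ[K] L)) (hξ : ξ ≠ 0)
    (β : L ⊗[K] L) (A : ℤ → ℕ → K) (hA : IsExpansion p n K L vL 𝒯 πL β A)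
    (hphiβ : ∀ σ : L ≃ₐ[K] L, phi K L β σ = algebraMap K L (ξ.coeff σ))
    (fξ : ℤ → ℤ)
    (hf : ∀ m : ℤ, IsLeast
      {v : WithTop ℤ | ∃ y : L, (m : WithTop ℤ) ≤ vL y ∧ vL (actK K L ξ y) = v}
      ((fξ m : ℤ) : WithTop ℤ))
    (a b : ℤ) :
    (a, b) ∈ Dset p n A ↔ fξ (-b - (d - (p : ℤ) ^ n + 1)) ≤ a := by
  classical
  obtain ⟨hv, hgal, hval3, hcomp, hperf⟩ := hctx
  have hp0 : 0 < p := hp.pos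
  set P : ℤ := ((p ^ n : ℕ) : ℤ) with hPdef
  have hPpos : 0 < P := by rw [hPdef]; exact_mod_cast pow_pos hp0 n
  have hPcast : (p : ℤ) ^ n = P := by rw [hPdef]; push_cast; ring
  have hdeg' : Fintype.card (L ≃ₐ[K] L) = p ^ n := by
    rw [← Nat.card_eq_fintype_card, hdeg]
  obtain ⟨κ, hκ0, hκv0⟩ := S5.exists_kappa hv hgal hπ
  rw [hdeg'] at hκv0
  have hκv : vL (algebraMap K L κ) = ((((p ^ n : ℕ) : ℤ) : ℤ) : WithTop ℤ) := hκv0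
  have hfr : Module.finrank K L = p ^ n := by
    rw [← IsGalois.card_aut_eq_finrank, hdeg]
  obtain ⟨bas, hbas⟩ := S5.exists_basis_pow hv hval3 hπ hp0 hdeg
  obtain ⟨x0, hx0v, hx0t⟩ := S5.diff_witness hv hval3 hd hκv hp0
  obtain ⟨hT, N, c, hN, hβ, happ⟩ := hA
  have hπ' : vL πL = ((1 : ℤ) : WithTop ℤ) := by exact_mod_cast hπ
  set m : ℤ := -b - (d - (p : ℤ) ^ n + 1) with hmdef
  have hmeq : m = -b - d + P - 1 := by rw [hmdef, ← hPcast]; ring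
  set kf : ℕ → ℤ := fun j => Int.ediv ((j : ℤ) - b + P - 1) P with hkfdef
  have hkf : ∀ j : ℕ, (j : ℤ) - b ≤ P * kf j ∧ P * kf j ≤ (j : ℤ) - b + P - 1 := by
    intro j
    have h1 : P * Int.ediv ((j : ℤ) - b + P - 1) P + Int.emod ((j : ℤ) - b + P - 1) P
        = (j : ℤ) - b + P - 1 := Int.mul_ediv_add_emod _ _
    have h2 : 0 ≤ Int.emod ((j : ℤ) - b + P - 1) P := Int.emod_nonneg _ hPpos.ne'
    have h3 : Int.emod ((j : ℤ) - b + P - 1) P < P := Int.emod_lt_of_pos _ hPpos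
    have hkfj : kf j = Int.ediv ((j : ℤ) - b + P - 1) P := rfl
    constructor
    · rw [hkfj]; omega
    · rw [hkfj]; omega
  have hact : ∀ y : L, actK K L ξ y = ∑ j ∈ Finset.range (p ^ n),
      c j * algebraMap K L (Algebra.trace K L (πL ^ j * y)) :=
    S5.actK_eq ξ β c hβ hphiβ
  have hDiff : (a, b) ∈ Dset p n A ↔ ∃ j : ℕ, j < p ^ n ∧ ∃ i0 : ℤ,
      (A i0 j ≠ 0 ∧ ∀ i : ℤ, A i j ≠ 0 → i0 ≤ i) ∧ i0 + P * kf j ≤ a := by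
    constructor
    · rintro ⟨r, ⟨i, j, hjP, hAij, rfl⟩, k, hk1, hk2⟩
      obtain ⟨i0, hi0, hi0min⟩ := Int.exists_least_of_bdd
        (P := fun z => A z j ≠ 0)
        ⟨N j, fun z hz => by by_contra hcon; exact hz (hN j z (by omega))⟩ ⟨i, hAij⟩
      refine ⟨j, hjP, i0, ⟨hi0, hi0min⟩, ?_⟩
      rw [hPcast] at hk1 hk2
      have hd1 : P * kf j ≤ ((j:ℤ) - b) + P - 1 := (hkf j).2
      have hd2 : P * kf j < P * (1 - k) := by
        have hexp : P * (1 - k) = P - P * k := by ring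
        have hcomm : k * P = P * k := by ring
        omega
      have hd3 : kf j ≤ -k := by
        have := lt_of_mul_lt_mul_left hd2 hPpos.le
        omega
      have hd4 : P * kf j ≤ P * (-k) := mul_le_mul_of_nonneg_left hd3 hPpos.le
      have hd5 : P * (-k) = -(k * P) := by ring
      linarith [hi0min i hAij, hd4, hd5, hk1]
    · rintro ⟨j, hjP, i0, ⟨hA0, hminA⟩, hle⟩
      refine ⟨(i0, (j : ℤ)), ⟨i0, j, hjP, hA0, rfl⟩, -(kf j), ?_, ?_⟩
      · rw [hPcast]
        have : -(kf j) * P = -(P * kf j) := by ring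
        omega
      · rw [hPcast]
        have h1 := (hkf j).1
        have : -(kf j) * P = -(P * kf j) := by ring
        omega
  have hterm : ∀ y : L, (m : WithTop ℤ) ≤ vL y → ∀ j : ℕ, j < p ^ n →
      ∀ i0 : ℤ, A i0 j ≠ 0 → (∀ i : ℤ, A i j ≠ 0 → i0 ≤ i) →
      ((i0 + P * kf j : ℤ) : WithTop ℤ) ≤
        vL (c j * algebraMap K L (Algebra.trace K L (πL ^ j * y))) := by
    intro y hym j hjP i0 hA0 hminA
    have hcj : vL (c j) = (i0 : WithTop ℤ) :=
      S5.col_val_min hv h𝒯 hπ hT (hN j) (happ j hjP) hA0 hminA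
    have hxv : ((P * kf j - d : ℤ) : WithTop ℤ) ≤ vL (πL ^ j * y) := by
      rw [hv.2.2.1, S5.v_pow hv hπ' j]
      calc ((P * kf j - d : ℤ) : WithTop ℤ)
          ≤ (((j : ℤ) * 1 + m : ℤ) : WithTop ℤ) := by
            rw [WithTop.coe_le_coe]
            have h4 := (hkf j).2
            omega
        _ = (((j : ℤ) * 1 : ℤ) : WithTop ℤ) + (m : WithTop ℤ) := by rw [← WithTop.coe_add]
        _ ≤ _ := add_le_add_right hym _
    have htrb := S5.trace_lb hv hd.1 hκv0 (πL ^ j * y) (kf j) hxv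
    rw [hv.2.2.1, hcj]
    calc ((i0 + P * kf j : ℤ) : WithTop ℤ)
        = (i0 : WithTop ℤ) + ((P * kf j : ℤ) : WithTop ℤ) := by rw [← WithTop.coe_add]
      _ ≤ (i0 : WithTop ℤ) + vL (algebraMap K L (Algebra.trace K L (πL ^ j * y))) := by
          exact add_le_add_right htrb _
  rw [hDiff]
  constructor
  · rintro ⟨j, hjP, i0, ⟨hA0, hminA⟩, hle⟩
    obtain ⟨y, hy⟩ := S5.exists_dual hp0 hfr bas hbas ⟨j, hjP⟩ (κ ^ (kf j))
    have hκzp : vL (algebraMap K L (κ ^ (kf j))) = ((P * kf j : ℤ) : WithTop ℤ) := by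
      rw [map_zpow₀, S5.v_zpow hv hκv (kf j)]
      congr 1
      simp only [hPdef]
      ring
    have hytr : ∀ j' : ℕ, j' < p ^ n →
        algebraMap K L (Algebra.trace K L (πL ^ j' * y))
        = if j' = j then algebraMap K L (κ ^ (kf j)) else 0 := by
      intro j' hj'
      have h5 := hy ⟨j', hj'⟩
      rcases eq_or_ne j' j with rfl | hne
      · rw [if_pos rfl] at h5 ⊢
        rw [h5]
      · have hfne : (⟨j', hj'⟩ : Fin (p ^ n)) ≠ ⟨j, hjP⟩ := by
          intro h
          exact hne (congrArg Fin.val h)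
        rw [if_neg hfne] at h5
        rw [if_neg hne, h5]
        exact map_zero _
    have hym : (m : WithTop ℤ) ≤ vL y := by
      have hkey := S5.key_lb hv hval3 hπ hp0 hκ0 hκv hx0v hx0t bas hbas
        kf hkf y (by
          intro j' hj'
          rw [hytr j' hj']
          rcases eq_or_ne j' j with rfl | hne
          · rw [if_pos rfl, hκzp]
          · rw [if_neg hne, hv.1]
            exact le_top)
      rw [hmeq]
      exact hkey
    have hsum : actK K L ξ y = c j * algebraMap K L (κ ^ (kf j)) := by
      rw [hact y]
      rw [Finset.sum_eq_single_of_mem j (Finset.mem_range.mpr hjP)]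
      · rw [hytr j hjP, if_pos rfl]
      · intro j' hj' hne
        rw [hytr j' (Finset.mem_range.mp hj'), if_neg hne, mul_zero]
    have hcj : vL (c j) = (i0 : WithTop ℤ) :=
      S5.col_val_min hv h𝒯 hπ hT (hN j) (happ j hjP) hA0 hminA
    have hval : vL (actK K L ξ y) = ((i0 + P * kf j : ℤ) : WithTop ℤ) := by
      rw [hsum, hv.2.2.1, hcj, hκzp, ← WithTop.coe_add]
    have hmem : ((i0 + P * kf j : ℤ) : WithTop ℤ) ∈
        {v : WithTop ℤ | ∃ y : L, (m : WithTop ℤ) ≤ vL y ∧ vL (actK K L ξ y) = v} :=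
      ⟨y, hym, hval⟩
    have hlb := (hf m).2 hmem
    have hfin : fξ m ≤ i0 + P * kf j := by exact_mod_cast hlb
    omega
  · intro hle
    obtain ⟨y, hym, hyv⟩ := (hf m).1
    by_contra hcon
    push_neg at hcon
    have hbound : ∀ j ∈ Finset.range (p ^ n), ((a + 1 : ℤ) : WithTop ℤ) ≤
        vL (c j * algebraMap K L (Algebra.trace K L (πL ^ j * y))) := by
      intro j hj
      have hjP := Finset.mem_range.mp hj
      rcases em (∃ i : ℤ, A i j ≠ 0) with hex | hnex
      · obtain ⟨i0, hi0, hi0min⟩ := Int.exists_least_of_bdd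
          (P := fun z => A z j ≠ 0)
          ⟨N j, fun z hz => by by_contra hc; exact hz (hN j z (by omega))⟩ hex
        have h1 := hterm y hym j hjP i0 hi0 hi0min
        have h2 : a + 1 ≤ i0 + P * kf j := hcon j hjP i0 ⟨hi0, hi0min⟩
        exact le_trans (WithTop.coe_le_coe.mpr h2) h1
      · push_neg at hnex
        have hc0 : c j = 0 := S5.col_val_zero hv (happ j hjP) hnex
        rw [hc0, zero_mul, hv.1]
        exact le_top
    have hge := S5.v_sum_ge hv (Finset.range (p ^ n)) _ hbound
    rw [← hact y, hyv, WithTop.coe_le_coe] at hge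
    omega
end

section
/- Suppose p ∤ b_i for 1 ≤ i ≤ n. Then the map r∘(−𝔟) : S_{p^n} → S_{p^n}, sending s to the least nonnegative residue of −𝔟(s) modulo p^n, is a bijection. -/
open scoped TensorProduct

lemma digit_eq_div (p s j : ℕ) (hp : 0 < p) : digit p s j = s % p ^ (j+1) / p ^ j := by
  rw [pow_succ, Nat.mod_mul, digit,
    Nat.add_mul_div_left _ _ (pow_pos hp j),
    Nat.div_eq_of_lt (Nat.mod_lt s (pow_pos hp j))]
  omega

lemma digit_eq_of_mod (p s s' i j : ℕ) (hp : 0 < p) (h : s % p ^ i = s' % p ^ i)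
    (hj : j < i) : digit p s j = digit p s' j := by
  rw [digit_eq_div p s j hp, digit_eq_div p s' j hp,
    ← Nat.mod_mod_of_dvd s (pow_dvd_pow p hj), ← Nat.mod_mod_of_dvd s' (pow_dvd_pow p hj), h]

lemma mod_succ_eq (p s i : ℕ) : s % p ^ (i+1) = s % p ^ i + p ^ i * digit p s i := by
  rw [pow_succ, Nat.mod_mul, digit]

lemma bfrak_inj (p n : ℕ) (hp : p.Prime) (b : ℕ → ℤ)
    (hpb : ∀ i : ℕ, 1 ≤ i → i ≤ n → ¬ ((p : ℤ) ∣ b i))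
    (s s' : ℕ) (hs : s < p ^ n) (hs' : s' < p ^ n)
    (hdvd : ((p : ℤ) ^ n) ∣ (bfrak p n b s - bfrak p n b s')) : s = s' := by
  have hppos := hp.pos
  have key : ∀ i, i ≤ n → s % p ^ i = s' % p ^ i := by
    intro i
    induction i with
    | zero => intro _; rw [pow_zero, Nat.mod_one, Nat.mod_one]
    | succ i ih =>
      intro hin
      have hi : i < n := hin
      have hmod := ih hi.le
      set D : ℕ → ℤ := fun j => ((digit p s j : ℤ) - digit p s' j) * (p : ℤ) ^ j * b (n - j)
        with hD
      have htot : bfrak p n b s - bfrak p n b s' = ∑ j ∈ Finset.range n, D j := by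
        rw [bfrak, bfrak, ← Finset.sum_sub_distrib]
        exact Finset.sum_congr rfl fun j _ => by ring
      have hdvd1 : ((p : ℤ) ^ (i+1)) ∣ ∑ j ∈ Finset.range n, D j := by
        rw [← htot]; exact dvd_trans (pow_dvd_pow _ hin) hdvd
      have hrest : ((p : ℤ) ^ (i+1)) ∣ ∑ j ∈ (Finset.range n).erase i, D j := by
        apply Finset.dvd_sum
        intro j hj
        rcases Finset.mem_erase.mp hj with ⟨hne, _⟩
        rcases lt_or_gt_of_ne hne with hlt | hgt
        · have : digit p s j = digit p s' j := digit_eq_of_mod p s s' i j hppos hmod hlt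
          simp [hD, this]
        · exact Dvd.dvd.mul_right (Dvd.dvd.mul_left (pow_dvd_pow _ hgt) _) _
      have hDi : ((p : ℤ) ^ (i+1)) ∣ D i := by
        rw [← Finset.sum_erase_add _ D (Finset.mem_range.mpr hi)] at hdvd1
        exact (dvd_add_right hrest).mp hdvd1
      have hdig : digit p s i = digit p s' i := by
        have hpi : ((p : ℤ) ^ i) ≠ 0 := by positivity
        have h2 : ((p : ℤ)) * (p : ℤ) ^ i ∣
            (((digit p s i : ℤ) - digit p s' i) * b (n - i)) * (p : ℤ) ^ i := by
          rw [← pow_succ']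
          convert hDi using 1
          simp only [hD]; ring
        have h1 : (p : ℤ) ∣ ((digit p s i : ℤ) - digit p s' i) * b (n - i) :=
          (mul_dvd_mul_iff_right hpi).mp h2
        have hprime : Prime (p : ℤ) := Nat.prime_iff_prime_int.mp hp
        have hnb : ¬ ((p : ℤ) ∣ b (n - i)) := hpb (n - i) (by omega) (by omega)
        have h3 : (p : ℤ) ∣ ((digit p s i : ℤ) - digit p s' i) :=
          (hprime.dvd_mul.mp h1).resolve_right hnb
        have d1 : digit p s i < p := Nat.mod_lt _ hppos
        have d2 : digit p s' i < p := Nat.mod_lt _ hppos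
        have h4 : ((digit p s i : ℤ) - digit p s' i) = 0 :=
          Int.eq_zero_of_abs_lt_dvd h3 (by rw [abs_lt]; omega)
        omega
      rw [mod_succ_eq, mod_succ_eq, hmod, hdig]
  have := key n le_rfl
  rwa [Nat.mod_eq_of_lt hs, Nat.mod_eq_of_lt hs'] at this

/-- If p ∤ bᵢ for 1 ≤ i ≤ n, then r ∘ (-𝔟) is a bijection of S_{p^n}. -/
theorem stmt_15 (p n : ℕ) (hp : p.Prime) (hn : 1 ≤ n) (b : ℕ → ℤ)
    (hpb : ∀ i : ℕ, 1 ≤ i → i ≤ n → ¬ ((p : ℤ) ∣ b i)) :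
    Set.BijOn (fun s : ℕ => rres p n (-(bfrak p n b s)))
      {s : ℕ | s < p ^ n} {s : ℕ | s < p ^ n} := by
  have hp0 : (0 : ℤ) < (p : ℤ) := by exact_mod_cast hp.pos
  have hpn : (0 : ℤ) < (p : ℤ) ^ n := by positivity
  have hmaps : Set.MapsTo (fun s : ℕ => rres p n (-(bfrak p n b s)))
      {s : ℕ | s < p ^ n} {s : ℕ | s < p ^ n} := by
    intro s _
    simp only [Set.mem_setOf_eq, rres]
    have h1 := Int.emod_lt_of_pos (-(bfrak p n b s)) hpn
    have h2 := Int.emod_nonneg (-(bfrak p n b s)) (ne_of_gt hpn)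
    have : ((p : ℤ) ^ n) = ((p ^ n : ℕ) : ℤ) := by push_cast; ring
    omega
  have hinj : Set.InjOn (fun s : ℕ => rres p n (-(bfrak p n b s))) {s : ℕ | s < p ^ n} := by
    intro s hs s' hs' heq
    simp only [rres] at heq
    have h2 := Int.emod_nonneg (-(bfrak p n b s)) (ne_of_gt hpn)
    have h2' := Int.emod_nonneg (-(bfrak p n b s')) (ne_of_gt hpn)
    have hmeq : (-(bfrak p n b s)) % ((p : ℤ) ^ n) = (-(bfrak p n b s')) % ((p : ℤ) ^ n) := by
      omega
    have hdvd : ((p : ℤ) ^ n) ∣ (bfrak p n b s - bfrak p n b s') := by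
      have := Int.ModEq.dvd hmeq
      have h : (-(bfrak p n b s')) - (-(bfrak p n b s)) = bfrak p n b s - bfrak p n b s' := by ring
      rwa [← h]
    exact bfrak_inj p n hp b hpb s s' hs hs' hdvd
  have hfin : ({s : ℕ | s < p ^ n} : Set ℕ).Finite := Set.finite_Iio _
  exact (hfin.injOn_iff_bijOn_of_mapsTo hmaps).mp hinj
end
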